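/- arXiv:1201.3947 — 5 statements merged into one kernel-verified Lean document; each statement's English description precedes it below -/
import Mathlib

section
/- Let γ be the standard Gaussian measure on ℝ and γ_∞ the countable product measure on ℝ^ℕ. For every real number a and every Borel set K ⊆ ℝ^ℕ, ∫ γ_∞(√(1+a²)·K + a·y) dγ_∞(y) = γ_∞(K), where √(1+a²)·K + a·y denotes the set {√(1+a²)·x + a·y : x ∈ K}. -/
open MeasureTheory ProbabilityTheory

open scoped NNReal ENNReal

/-- `μ` is the countable product of standard one-dimensional Gaussian measures on `ℝ^ℕ`:
a probability measure whose coordinates are i.i.d. standard Gaussians. -/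
def IsStdGaussianSeq (μ : Measure (ℕ → ℝ)) : Prop :=
  IsProbabilityMeasure μ ∧
  iIndepFun (fun i (x : ℕ → ℝ) => x i) μ ∧
  ∀ i, μ.map (fun x => x i) = gaussianReal 0 1

lemma pdf_swap (a u y : ℝ) (c : ℝ) (hc : 0 < c) (hc2 : c^2 = 1 + a^2)
    (v : ℝ≥0) (hv : (v : ℝ) = (1/c)^2) :
    gaussianPDFReal 0 1 y * gaussianPDFReal (-(a*y)/c) v u
      = gaussianPDFReal 0 1 u * gaussianPDFReal (-(a*u)/c) v y := by
  simp only [gaussianPDFReal]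
  rw [mul_mul_mul_comm, ← Real.exp_add, mul_mul_mul_comm, ← Real.exp_add]
  congr 2
  rw [hv]
  have hc0 : c ≠ 0 := hc.ne'
  field_simp
  simp only [NNReal.coe_one]
  linear_combination (y^2 - u^2) * hc2

lemma gauss_conv (a : ℝ) :
    ((gaussianReal 0 1).prod (gaussianReal 0 1)).map
      (fun q : ℝ × ℝ => (Real.sqrt (1 + a^2))⁻¹ * (q.2 - a * q.1)) = gaussianReal 0 1 := by
  set c : ℝ := Real.sqrt (1 + a^2) with hcdef
  have hpos : (0:ℝ) < 1 + a^2 := by positivity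
  have hc : 0 < c := Real.sqrt_pos.2 hpos
  have hc0 : c ≠ 0 := hc.ne'
  have hc2 : c^2 = 1 + a^2 := Real.sq_sqrt hpos.le
  set v : ℝ≥0 := ⟨(1/c)^2, sq_nonneg _⟩ with hvdef
  have hv : (v : ℝ) = (1/c)^2 := rfl
  have hv0 : v ≠ 0 := by
    intro h
    have : ((v:ℝ)) = 0 := by rw [h]; simp
    rw [hv] at this
    simp [hc0] at this
  -- the map for fixed y
  have hmeas : Measurable (fun q : ℝ × ℝ => c⁻¹ * (q.2 - a * q.1)) :=
    ((measurable_snd.sub (measurable_fst.const_mul a)).const_mul c⁻¹)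
  have map_fix : ∀ y : ℝ, (gaussianReal 0 1).map (fun x => c⁻¹ * (x - a * y))
      = gaussianReal (-(a*y)/c) v := by
    intro y
    have h1 : (gaussianReal 0 1).map (fun x => (1/c) * x)
        = gaussianReal ((1/c) * 0) (⟨(1/c)^2, sq_nonneg _⟩ * 1) :=
      gaussianReal_map_const_mul (1/c)
    have h2 : (fun x : ℝ => c⁻¹ * (x - a * y))
        = (fun x : ℝ => x + (-(a*y)/c)) ∘ (fun x : ℝ => (1/c) * x) := by
      funext x; simp only [Function.comp]; field_simp; ring
    rw [h2, ← Measure.map_map (measurable_add_const _) (measurable_const_mul _), h1]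
    rw [gaussianReal_map_add_const]
    congr 1
    · ring
    · simp [hvdef]; exact mul_one _
  refine Measure.ext fun s hs => ?_
  rw [Measure.map_apply hmeas hs, Measure.prod_apply (hmeas hs)]
  have key : ∀ y : ℝ, (gaussianReal 0 1) (Prod.mk y ⁻¹' ((fun q : ℝ × ℝ => c⁻¹ * (q.2 - a * q.1)) ⁻¹' s))
      = ∫⁻ u in s, gaussianPDF (-(a*y)/c) v u := by
    intro y
    have : Prod.mk y ⁻¹' ((fun q : ℝ × ℝ => c⁻¹ * (q.2 - a * q.1)) ⁻¹' s)
        = (fun x => c⁻¹ * (x - a * y)) ⁻¹' s := rfl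
    rw [this, ← Measure.map_apply (by fun_prop) hs, map_fix y, gaussianReal_apply _ hv0]
  simp_rw [key]
  have F_meas : Measurable (fun p : ℝ × ℝ => gaussianPDF (-(a*p.1)/c) v p.2) := by
    unfold gaussianPDF gaussianPDFReal
    apply Measurable.ennreal_ofReal
    fun_prop
  have Hmeas : Measurable (fun p : ℝ × ℝ =>
      Set.indicator s (fun u => gaussianPDF 0 1 p.1 * gaussianPDF (-(a*p.1)/c) v u) p.2) := by
    have heq : (fun p : ℝ × ℝ =>
        Set.indicator s (fun u => gaussianPDF 0 1 p.1 * gaussianPDF (-(a*p.1)/c) v u) p.2)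
        = Set.indicator (Prod.snd ⁻¹' s)
          (fun p : ℝ × ℝ => gaussianPDF 0 1 p.1 * gaussianPDF (-(a*p.1)/c) v p.2) := by
      funext p; by_cases hp : p.2 ∈ s <;> simp [Set.indicator, hp]
    rw [heq]
    exact (((measurable_gaussianPDF 0 1).comp measurable_fst).mul F_meas).indicator
      (measurable_snd hs)
  have int_meas : Measurable (fun y : ℝ => ∫⁻ u in s, gaussianPDF (-(a*y)/c) v u) := by
    have heq : (fun y : ℝ => ∫⁻ u in s, gaussianPDF (-(a*y)/c) v u)
        = fun y : ℝ => ∫⁻ u, Set.indicator s (fun u => gaussianPDF (-(a*y)/c) v u) u ∂volume := by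
      funext y; rw [lintegral_indicator hs _]
    rw [heq]
    apply Measurable.lintegral_prod_right'
      (f := fun p : ℝ × ℝ => Set.indicator s (fun u => gaussianPDF (-(a*p.1)/c) v u) p.2)
    have heq2 : (fun p : ℝ × ℝ => Set.indicator s (fun u => gaussianPDF (-(a*p.1)/c) v u) p.2)
        = Set.indicator (Prod.snd ⁻¹' s) (fun p : ℝ × ℝ => gaussianPDF (-(a*p.1)/c) v p.2) := by
      funext p; by_cases hp : p.2 ∈ s <;> simp [Set.indicator, hp]
    rw [heq2]
    exact F_meas.indicator (measurable_snd hs)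
  rw [gaussianReal_of_var_ne_zero _ one_ne_zero,
    lintegral_withDensity_eq_lintegral_mul _ (measurable_gaussianPDF 0 1) int_meas,
    withDensity_apply _ hs]
  have swap_pt : ∀ u y : ℝ, gaussianPDF 0 1 y * gaussianPDF (-(a*y)/c) v u
      = gaussianPDF 0 1 u * gaussianPDF (-(a*u)/c) v y := by
    intro u y
    unfold gaussianPDF
    rw [← ENNReal.ofReal_mul (gaussianPDFReal_nonneg _ _ _),
      ← ENNReal.ofReal_mul (gaussianPDFReal_nonneg _ _ _),
      pdf_swap a u y c hc hc2 v hv]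
  calc ∫⁻ y, (gaussianPDF 0 1 * fun y => ∫⁻ u in s, gaussianPDF (-(a*y)/c) v u) y ∂volume
      = ∫⁻ y, ∫⁻ u, Set.indicator s
          (fun u => gaussianPDF 0 1 y * gaussianPDF (-(a*y)/c) v u) u ∂volume ∂volume := by
        refine lintegral_congr fun y => ?_
        simp only [Pi.mul_apply]
        rw [← lintegral_indicator hs _,
          ← lintegral_const_mul _ ((measurable_gaussianPDF _ _).indicator hs)]
        refine lintegral_congr fun u => ?_
        by_cases hu : u ∈ s <;> simp [hu]
    _ = ∫⁻ u, ∫⁻ y, Set.indicator s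
          (fun u => gaussianPDF 0 1 y * gaussianPDF (-(a*y)/c) v u) u ∂volume ∂volume :=
        lintegral_lintegral_swap Hmeas.aemeasurable
    _ = ∫⁻ u, Set.indicator s (gaussianPDF 0 1) u ∂volume := by
        refine lintegral_congr fun u => ?_
        by_cases hu : u ∈ s
        · simp only [hu, Set.indicator_of_mem]
          simp_rw [swap_pt u]
          rw [lintegral_const_mul _ (measurable_gaussianPDF _ _),
            lintegral_gaussianPDF_eq_one _ hv0, mul_one]
        · simp [hu]
    _ = ∫⁻ u in s, gaussianPDF 0 1 u ∂volume := (lintegral_indicator hs _)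


-- M2: coordinatewise map of pi measure
lemma pi_map_comp {ι : Type*} [Fintype ι] {α β : Type*} [MeasurableSpace α] [MeasurableSpace β]
    (μ : Measure α) [IsProbabilityMeasure μ] (f : α → β) (hf : Measurable f) :
    (Measure.pi fun _ : ι => μ).map (fun x i => f (x i)) = Measure.pi fun _ : ι => μ.map f := by
  refine (Measure.pi_eq fun s hs => ?_).symm
  have hm : Measurable (fun (x : ι → α) (i : ι) => f (x i)) :=
    measurable_pi_lambda _ fun i => hf.comp (measurable_pi_apply i)
  rw [Measure.map_apply hm (MeasurableSet.univ_pi hs)]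
  have hpre : (fun (x : ι → α) i => f (x i)) ⁻¹' Set.pi Set.univ s
      = Set.pi Set.univ fun i => f ⁻¹' s i := by ext x; simp
  rw [hpre, Measure.pi_pi]
  exact Finset.prod_congr rfl fun i _ => (Measure.map_apply hf (hs i)).symm

-- M1: finite-dimensional marginal of a std gaussian sequence
lemma restrict_map_eq_pi (μ : Measure (ℕ → ℝ)) (hγ : IsStdGaussianSeq μ) (I : Finset ℕ) :
    μ.map (I.restrict) = Measure.pi fun _ : I => gaussianReal 0 1 := by
  haveI := hγ.1
  refine (Measure.pi_eq fun s hs => ?_).symm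
  have hm : Measurable (I.restrict : (ℕ → ℝ) → (I → ℝ)) :=
    measurable_pi_lambda _ fun i => measurable_pi_apply _
  rw [Measure.map_apply hm (MeasurableSet.univ_pi hs)]
  classical
  set sets : ∀ i : ℕ, Set ℝ := fun i => if h : i ∈ I then s ⟨i, h⟩ else Set.univ with hsets
  have hpre : I.restrict ⁻¹' Set.pi Set.univ s = ⋂ i ∈ I, (fun x : ℕ → ℝ => x i) ⁻¹' sets i := by
    ext x
    simp only [Set.mem_preimage, Set.mem_univ_pi, Set.mem_iInter, Finset.restrict]
    constructor
    · intro h i hi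
      simp only [hsets, dif_pos hi]
      exact h ⟨i, hi⟩
    · intro h j
      have := h j j.2
      simpa [hsets, dif_pos j.2] using this
  rw [hpre, hγ.2.1.measure_inter_preimage_eq_mul I
    (fun i hi => by
      by_cases h : i ∈ I
      · simp only [hsets, dif_pos h]; exact hs _
      · simp [hsets, h])]
  have : ∀ i ∈ I, μ ((fun x : ℕ → ℝ => x i) ⁻¹' sets i) = (gaussianReal 0 1) (sets i) := by
    intro i hi
    rw [← hγ.2.2 i, Measure.map_apply (measurable_pi_apply i)]
    by_cases h : i ∈ I
    · simp only [hsets, dif_pos h]; exact hs _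
    · simp [hsets, h]
  rw [Finset.prod_congr rfl this]
  rw [← Finset.prod_coe_sort]
  refine Finset.prod_congr rfl fun j _ => ?_
  congr 1
  simp [hsets, dif_pos j.2]

lemma prod_map_T_eq (γinf : Measure (ℕ → ℝ)) (hγ : IsStdGaussianSeq γinf) (a : ℝ) :
    (γinf.prod γinf).map
      (fun (p : (ℕ → ℝ) × (ℕ → ℝ)) (i : ℕ) => (Real.sqrt (1 + a^2))⁻¹ * (p.2 i - a * p.1 i))
      = γinf := by
  haveI := hγ.1
  set c : ℝ := Real.sqrt (1 + a^2) with hcdef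
  set T : (ℕ → ℝ) × (ℕ → ℝ) → (ℕ → ℝ) := fun p i => c⁻¹ * (p.2 i - a * p.1 i) with hTdef
  have hT : Measurable T := measurable_pi_lambda _ fun i => by
    rw [hTdef]; fun_prop
  haveI : IsProbabilityMeasure ((γinf.prod γinf).map T) :=
    Measure.isProbabilityMeasure_map hT.aemeasurable
  refine ext_of_generate_finite (measurableCylinders (fun _ : ℕ => ℝ))
    generateFrom_measurableCylinders.symm isPiSystem_measurableCylinders (fun t ht => ?_)
    (by simp [measure_univ])
  obtain ⟨I, S, hS, rfl⟩ := (mem_measurableCylinders t).1 ht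
  have hrm : Measurable (I.restrict : (ℕ → ℝ) → (I → ℝ)) :=
    measurable_pi_lambda _ fun i => measurable_pi_apply _
  have hcyl : (cylinder I S : Set (ℕ → ℝ)) = I.restrict ⁻¹' S := rfl
  rw [hcyl, Measure.map_apply hT (hrm hS), ← Set.preimage_comp,
    ← Measure.map_apply (hrm.comp hT) hS,
    ← Measure.map_apply hrm hS, restrict_map_eq_pi γinf hγ I]
  -- now show the map equals the pi measure
  set g : ((I → ℝ) × (I → ℝ)) → (I → ℝ) := fun q i => c⁻¹ * (q.2 i - a * q.1 i) with hgdef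
  have hg : Measurable g := measurable_pi_lambda _ fun i => by
    rw [hgdef]; fun_prop
  have hcomp : (I.restrict : (ℕ → ℝ) → (I → ℝ)) ∘ T
      = g ∘ (Prod.map (I.restrict) (I.restrict)) := rfl
  rw [hcomp, ← Measure.map_map hg (hrm.prodMap hrm),
    ← Measure.map_prod_map _ _ hrm hrm, restrict_map_eq_pi γinf hγ I]
  have he := measurePreserving_arrowProdEquivProdArrow ℝ ℝ I
    (fun _ : I => gaussianReal 0 1) (fun _ : I => gaussianReal 0 1)
  rw [← he.map_eq, Measure.map_map hg (MeasurableEquiv.arrowProdEquivProdArrow ℝ ℝ I).measurable]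
  have hge : g ∘ (MeasurableEquiv.arrowProdEquivProdArrow ℝ ℝ I)
      = fun (w : I → ℝ × ℝ) (i : I) =>
          (fun q : ℝ × ℝ => (Real.sqrt (1 + a^2))⁻¹ * (q.2 - a * q.1)) (w i) := rfl
  rw [hge, pi_map_comp _ _ (by fun_prop : Measurable (fun q : ℝ × ℝ => (Real.sqrt (1 + a^2))⁻¹ * (q.2 - a * q.1))),
    gauss_conv a]

theorem stmt_0 (γinf : Measure (ℕ → ℝ)) (hγ : IsStdGaussianSeq γinf) (a : ℝ)
    (K : Set (ℕ → ℝ)) (hK : MeasurableSet K) :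
    ∫⁻ y, γinf ((fun x => Real.sqrt (1 + a ^ 2) • x + a • y) '' K) ∂γinf = γinf K := by
  haveI := hγ.1
  set c : ℝ := Real.sqrt (1 + a ^ 2) with hcdef
  have hpos : (0:ℝ) < 1 + a ^ 2 := by positivity
  have hc : 0 < c := Real.sqrt_pos.2 hpos
  have hc0 : c ≠ 0 := hc.ne'
  set T : (ℕ → ℝ) × (ℕ → ℝ) → (ℕ → ℝ) := fun p i => c⁻¹ * (p.2 i - a * p.1 i) with hTdef
  have hT : Measurable T := measurable_pi_lambda _ fun i => by
    rw [hTdef]; fun_prop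
  have himg : ∀ y : ℕ → ℝ, ((fun x => c • x + a • y) '' K)
      = (fun z : ℕ → ℝ => fun i => c⁻¹ * (z i - a * y i)) ⁻¹' K := by
    intro y
    refine congrFun (Set.image_eq_preimage_of_inverse ?_ ?_) K
    · intro x
      funext i
      simp only [Pi.add_apply, Pi.smul_apply, smul_eq_mul]
      field_simp
      ring
    · intro z
      funext i
      simp only [Pi.add_apply, Pi.smul_apply, smul_eq_mul]
      field_simp
      ring
  calc ∫⁻ y, γinf ((fun x => c • x + a • y) '' K) ∂γinf
      = ∫⁻ y, γinf (Prod.mk y ⁻¹' (T ⁻¹' K)) ∂γinf := by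
        refine lintegral_congr fun y => ?_
        rw [himg y]
        rfl
    _ = (γinf.prod γinf) (T ⁻¹' K) := (Measure.prod_apply (hT hK)).symm
    _ = ((γinf.prod γinf).map T) K := (Measure.map_apply hT hK).symm
    _ = γinf K := by rw [hTdef, hcdef, prod_map_T_eq γinf hγ a]
end

section
/- Let γ_∞ be the infinite product of the standard Gaussian measure on ℝ^ℕ. If a ∈ ℝ and K ⊆ ℝ^ℕ is a Borel set with γ_∞(K) > 0, then for γ_∞-almost every y ∈ ℝ^ℕ, γ_∞(√(1+a²)·K + a·y) > 0. -/
open MeasureTheory ProbabilityTheory Real Set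
open scoped NNReal ENNReal

namespace StdGaussianAux
noncomputable def N : Measure ℝ := gaussianReal 0 1
instance : IsProbabilityMeasure N := by unfold N; infer_instance
lemma N_def : N = volume.withDensity (gaussianPDF 0 1) :=
  gaussianReal_of_var_ne_zero 0 one_ne_zero

lemma pdf_rot {α β : ℝ} (hαβ : α^2 + β^2 = 1) (hβ : β ≠ 0) (x u : ℝ) :
    gaussianPDFReal 0 1 x * gaussianPDFReal (α*x) (NNReal.mk (β^2) (sq_nonneg β)) u
      = gaussianPDFReal 0 1 u * gaussianPDFReal (α*u) (NNReal.mk (β^2) (sq_nonneg β)) x := by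
  have key : ∀ s t : ℝ, gaussianPDFReal 0 1 s * gaussianPDFReal (α*s) (NNReal.mk (β^2) (sq_nonneg β)) t
      = ((√(2*π*1))⁻¹*(√(2*π*β^2))⁻¹) * rexp (-(s-0)^2/(2*1) + -(t-α*s)^2/(2*β^2)) := by
    intro s t
    simp only [gaussianPDFReal, NNReal.coe_mk, NNReal.coe_one]
    rw [Real.exp_add]; ring
  rw [key, key]
  congr 1
  have hb2 : β^2 ≠ 0 := pow_ne_zero 2 hβ
  field_simp
  ring_nf
  congr 1
  field_simp
  linear_combination (u^2 - x^2) * hαβ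

lemma map_affine (α β t : ℝ) :
    N.map (fun r => α * t + β * r) = gaussianReal (α*t) ((NNReal.mk (β^2) (sq_nonneg β)) * 1) := by
  have : (fun r => α * t + β * r) = (fun z => α * t + z) ∘ (fun r => β * r) := rfl
  rw [this, ← Measure.map_map (by fun_prop) (by fun_prop)]
  unfold N
  rw [show (fun r => β * r) = (β * ·) by rfl, gaussianReal_map_const_mul,
    show (fun z => α * t + z) = (α * t + ·) by rfl, gaussianReal_map_const_add]
  norm_num

lemma rot_map {α β : ℝ} (hαβ : α^2 + β^2 = 1) :
    (N.prod N).map (fun p : ℝ × ℝ => α * p.1 + β * p.2) = N := by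
  have hmeas : Measurable (fun p : ℝ × ℝ => α * p.1 + β * p.2) := by fun_prop
  by_cases hβ : β = 0
  · have hα2 : α^2 = 1 := by rw [hβ] at hαβ; simpa using hαβ
    have hone : NNReal.mk (α^2) (sq_nonneg α) = 1 := by ext; simp [hα2]
    have hf : (fun p : ℝ × ℝ => α * p.1 + β * p.2) = (α * ·) ∘ Prod.fst := by
      funext p; simp [hβ]
    rw [hf, ← Measure.map_map (by fun_prop) measurable_fst, Measure.map_fst_prod]
    simp only [measure_univ, one_smul]
    show N.map (α * ·) = N
    unfold N
    rw [gaussianReal_map_const_mul, hone, mul_zero, one_mul]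
  · have hvne : NNReal.mk (β^2) (sq_nonneg β) ≠ 0 := by
      intro h
      exact pow_ne_zero 2 hβ (by simpa using congrArg NNReal.toReal h)
    have hj : Measurable (fun p : ℝ × ℝ => gaussianPDF (α * p.1) (NNReal.mk (β^2) (sq_nonneg β)) p.2) := by
      unfold gaussianPDF gaussianPDFReal
      fun_prop
    ext A hA
    rw [Measure.map_apply hmeas hA, Measure.prod_apply (hmeas hA)]
    have hsec : ∀ x : ℝ, N (Prod.mk x ⁻¹' ((fun p : ℝ × ℝ => α * p.1 + β * p.2) ⁻¹' A))
        = ∫⁻ u in A, gaussianPDF (α*x) (NNReal.mk (β^2) (sq_nonneg β)) u := by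
      intro x
      have h1 : Prod.mk x ⁻¹' ((fun p : ℝ × ℝ => α * p.1 + β * p.2) ⁻¹' A)
          = (fun r => α * x + β * r) ⁻¹' A := rfl
      rw [h1, ← Measure.map_apply (by fun_prop) hA, map_affine, mul_one,
        gaussianReal_apply _ hvne A]
    simp_rw [hsec]
    have hFmeas : Measurable fun x => ∫⁻ u in A, gaussianPDF (α*x) (NNReal.mk (β^2) (sq_nonneg β)) u :=
      Measurable.lintegral_prod_right hj
    rw [N_def, lintegral_withDensity_eq_lintegral_mul _ (measurable_gaussianPDF 0 1) hFmeas]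
    simp only [Pi.mul_apply]
    have hswap1 : ∀ x : ℝ, gaussianPDF 0 1 x * ∫⁻ u in A, gaussianPDF (α*x) (NNReal.mk (β^2) (sq_nonneg β)) u
        = ∫⁻ u in A, gaussianPDF 0 1 x * gaussianPDF (α*x) (NNReal.mk (β^2) (sq_nonneg β)) u := fun x =>
      (lintegral_const_mul _ (measurable_gaussianPDF _ _)).symm
    have hswap : ∫⁻ x, gaussianPDF 0 1 x * ∫⁻ u in A, gaussianPDF (α*x) (NNReal.mk (β^2) (sq_nonneg β)) u ∂volume
        = ∫⁻ u in A, ∫⁻ x, gaussianPDF 0 1 x * gaussianPDF (α*x) (NNReal.mk (β^2) (sq_nonneg β)) u ∂volume := by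
      simp_rw [hswap1]
      exact lintegral_lintegral_swap
        (((measurable_gaussianPDF 0 1).comp measurable_fst).mul hj).aemeasurable
    rw [hswap]
    have hinner : ∀ u, ∫⁻ x, gaussianPDF 0 1 x * gaussianPDF (α*x) (NNReal.mk (β^2) (sq_nonneg β)) u ∂volume
        = gaussianPDF 0 1 u := by
      intro u
      have hpt : ∀ x, gaussianPDF 0 1 x * gaussianPDF (α*x) (NNReal.mk (β^2) (sq_nonneg β)) u
          = gaussianPDF 0 1 u * gaussianPDF (α*u) (NNReal.mk (β^2) (sq_nonneg β)) x := by
        intro x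
        unfold gaussianPDF
        rw [← ENNReal.ofReal_mul (gaussianPDFReal_nonneg _ _ _),
          ← ENNReal.ofReal_mul (gaussianPDFReal_nonneg _ _ _), pdf_rot hαβ hβ]
      simp_rw [hpt]
      rw [lintegral_const_mul _ (measurable_gaussianPDF _ _),
        lintegral_gaussianPDF_eq_one _ hvne, mul_one]
    simp_rw [hinner]
    rw [withDensity_apply _ hA]


/-! ### Gaussian sequence predicate and uniqueness -/

/-- cylinder formula predicate -/
def GS (m : ℕ → ℝ) (μ : Measure (ℕ → ℝ)) : Prop :=
  IsProbabilityMeasure μ ∧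
  ∀ (s : Finset ℕ) (A : ℕ → Set ℝ), (∀ i ∈ s, MeasurableSet (A i)) →
    μ (⋂ i ∈ s, (fun x : ℕ → ℝ => x i) ⁻¹' A i) = ∏ i ∈ s, gaussianReal (m i) 1 (A i)

lemma gs_marginal {m : ℕ → ℝ} {μ : Measure (ℕ → ℝ)} (h : GS m μ) (i : ℕ) :
    μ.map (fun x => x i) = gaussianReal (m i) 1 := by
  ext A hA
  rw [Measure.map_apply (measurable_pi_apply i) hA]
  have := h.2 {i} (fun _ => A) (fun _ _ => hA)
  simpa using this

lemma gs_map_restrict {m : ℕ → ℝ} {μ : Measure (ℕ → ℝ)} (h : GS m μ) (s : Finset ℕ) :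
    μ.map s.restrict = Measure.pi (fun i : s => gaussianReal (m i) 1) := by
  haveI := h.1
  refine (Measure.pi_eq (μ := fun i : s => gaussianReal (m i) 1) fun B hB => ?_).symm
  rw [Measure.map_apply (s.measurable_restrict) (MeasurableSet.univ_pi hB)]
  classical
  set A : ℕ → Set ℝ := fun i => if hi : i ∈ s then B ⟨i, hi⟩ else univ with hA
  have hpre : s.restrict ⁻¹' (univ.pi B) = ⋂ i ∈ s, (fun x : ℕ → ℝ => x i) ⁻¹' A i := by
    ext x
    simp only [mem_preimage, mem_pi, mem_univ, forall_true_left, Finset.restrict,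
      mem_iInter, Subtype.forall]
    constructor
    · intro hx i hi
      simp only [hA, mem_preimage, dif_pos hi]
      exact hx i hi
    · intro hx i hi
      have := hx i hi
      simpa only [hA, mem_preimage, dif_pos hi] using this
  rw [hpre, h.2 s A (fun i hi => by simp only [hA, dif_pos hi]; exact hB _)]
  rw [← Finset.prod_coe_sort]
  exact Finset.prod_congr rfl fun i _ => by simp only [hA, dif_pos i.2]

lemma gs_unique {m : ℕ → ℝ} {μ ν : Measure (ℕ → ℝ)} (hμ : GS m μ) (hν : GS m ν) : μ = ν := by
  haveI := hμ.1; haveI := hν.1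
  refine ext_of_generate_finite _ generateFrom_measurableCylinders.symm
    isPiSystem_measurableCylinders (fun t ht => ?_) (by simp)
  obtain ⟨s, S, hS, rfl⟩ := (mem_measurableCylinders t).1 ht
  rw [cylinder, ← Measure.map_apply (s.measurable_restrict) hS,
    ← Measure.map_apply (s.measurable_restrict) hS, gs_map_restrict hμ, gs_map_restrict hν]


abbrev evalσ (i : ℕ) : MeasurableSpace (ℕ → ℝ) :=
  MeasurableSpace.comap (fun x : ℕ → ℝ => x i) inferInstance

lemma evalσ_le (i : ℕ) : evalσ i ≤ MeasurableSpace.pi :=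
  measurable_iff_comap_le.mp (measurable_pi_apply i)

lemma lintegral_prod_eval {μ : Measure (ℕ → ℝ)}
    (hind : iIndep evalσ μ)
    (s : Finset ℕ) (h : ℕ → ℝ → ℝ≥0∞) (hh : ∀ i, Measurable (h i)) :
    ∫⁻ x, ∏ i ∈ s, h i (x i) ∂μ = ∏ i ∈ s, ∫⁻ x, h i (x i) ∂μ := by
  classical
  induction s using Finset.induction with
  | empty => haveI := hind.isProbabilityMeasure; simp
  | @insert j s' hj ih =>
    simp only [Finset.prod_insert hj]
    have hdisj : Disjoint ({j} : Set ℕ) (↑s' : Set ℕ) := by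
      simp [Set.disjoint_singleton_left, hj]
    have hIndep := indep_iSup_of_disjoint evalσ_le hind hdisj
    rw [show (⨆ i ∈ ({j} : Set ℕ), evalσ i) = evalσ j by simp] at hIndep
    have hevalg : ∀ i ∈ s', Measurable[⨆ i ∈ (↑s' : Set ℕ), evalσ i] (fun x : ℕ → ℝ => x i) := by
      intro i hi
      exact (Measurable.of_comap_le le_rfl).mono
        (le_iSup₂ (f := fun i (_ : i ∈ (↑s' : Set ℕ)) => evalσ i) i hi) le_rfl
    have hevalf : Measurable[evalσ j] (fun x : ℕ → ℝ => x j) := Measurable.of_comap_le le_rfl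
    exact (lintegral_mul_eq_lintegral_mul_lintegral_of_independent_measurableSpace
      (evalσ_le j) (iSup₂_le fun i _ => evalσ_le i) hIndep
      (f := fun x => h j (x j)) (g := fun x => ∏ i ∈ s', h i (x i))
      (by exact (hh j).comp hevalf)
      (Finset.measurable_prod s' fun i hi => by exact (hh i).comp (hevalg i hi))).trans (by rw [ih])


/-! ### Quasi-invariance under finitely supported shifts -/

noncomputable def d (t : ℝ) : ℝ → ℝ≥0∞ := fun x => ENNReal.ofReal (rexp (t*x - t^2/2))

lemma d_meas (t : ℝ) : Measurable (d t) := by unfold d; fun_prop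

lemma d_ne_zero (t x : ℝ) : d t x ≠ 0 := by
  simp only [d, ne_eq, ENNReal.ofReal_eq_zero, not_le]
  exact exp_pos _

lemma d_zero : d 0 = fun _ => 1 := by
  funext x; simp [d]

lemma withDensity_d (t : ℝ) : N.withDensity (d t) = gaussianReal t 1 := by
  rw [N_def, ← withDensity_mul _ (measurable_gaussianPDF 0 1) (d_meas t),
    gaussianReal_of_var_ne_zero t one_ne_zero]
  congr 1
  funext x
  simp only [Pi.mul_apply, gaussianPDF, d,
    ← ENNReal.ofReal_mul (gaussianPDFReal_nonneg _ _ _)]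
  congr 1
  simp only [gaussianPDFReal, NNReal.coe_one]
  rw [mul_assoc, ← Real.exp_add]
  congr 1
  ring

noncomputable def ρ (v : ℕ → ℝ) (n : ℕ) : (ℕ → ℝ) → ℝ≥0∞ :=
  fun x => ∏ i ∈ Finset.range n, d (v i) (x i)

lemma ρ_meas (v : ℕ → ℝ) (n : ℕ) : Measurable (ρ v n) :=
  Finset.measurable_prod _ fun i _ => by exact (d_meas (v i)).comp (measurable_pi_apply i)

lemma ρ_ne_zero (v : ℕ → ℝ) (n : ℕ) (x : ℕ → ℝ) : ρ v n x ≠ 0 := by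
  rw [ρ, Finset.prod_ne_zero_iff]
  exact fun i _ => d_ne_zero _ _

lemma gs_withDensity {γ : Measure (ℕ → ℝ)} (hGS : GS 0 γ) (hind : iIndep evalσ γ)
    (v : ℕ → ℝ) (n : ℕ) (hv : ∀ i, n ≤ i → v i = 0) :
    GS v (γ.withDensity (ρ v n)) := by
  classical
  have key : ∀ (s : Finset ℕ) (A : ℕ → Set ℝ), (∀ i ∈ s, MeasurableSet (A i)) →
      (γ.withDensity (ρ v n)) (⋂ i ∈ s, (fun x : ℕ → ℝ => x i) ⁻¹' A i)
        = ∏ i ∈ s, gaussianReal (v i) 1 (A i) := by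
    intro s A hA
    set t := s ∪ Finset.range n with ht
    set A' : ℕ → Set ℝ := fun i => if i ∈ s then A i else univ with hA'
    have hA'm : ∀ i, MeasurableSet (A' i) := by
      intro i
      by_cases hi : i ∈ s <;> simp [hA', hi, hA i]
    set C := ⋂ i ∈ s, (fun x : ℕ → ℝ => x i) ⁻¹' A i with hC
    have hCm : MeasurableSet C :=
      MeasurableSet.biInter (Finset.countable_toSet s)
        fun i hi => measurable_pi_apply i (hA i hi)
    set h : ℕ → ℝ → ℝ≥0∞ := fun i => (A' i).indicator (d (v i)) with hdef
    have hhm : ∀ i, Measurable (h i) := fun i => (d_meas (v i)).indicator (hA'm i)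
    have hpt : ∀ x, C.indicator (ρ v n) x = ∏ i ∈ t, h i (x i) := by
      intro x
      by_cases hx : x ∈ C
      · rw [indicator_of_mem hx]
        have hx' : ∀ i ∈ s, x i ∈ A i := by
          simpa only [hC, mem_iInter, mem_preimage] using hx
        have hfac : ∀ i ∈ t, h i (x i) = d (v i) (x i) := by
          intro i _
          simp only [hdef]
          by_cases hi : i ∈ s
          · rw [indicator_of_mem]; simp only [hA', if_pos hi]; exact hx' i hi
          · rw [indicator_of_mem]; simp [hA', if_neg hi]
        rw [Finset.prod_congr rfl hfac, ρ]
        refine Finset.prod_subset Finset.subset_union_right fun i hi hni => ?_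
        have : v i = 0 := hv i (by simpa using hni)
        simp [this, d_zero]
      · rw [indicator_of_notMem hx]
        have : ∃ i ∈ s, x i ∉ A i := by
          by_contra hcon
          push_neg at hcon
          exact hx (by simp only [hC, mem_iInter, mem_preimage]; exact hcon)
        obtain ⟨i, hi, hxi⟩ := this
        refine (Finset.prod_eq_zero (Finset.mem_union_left _ hi) ?_).symm
        simp only [hdef]
        rw [indicator_of_notMem]
        simp only [hA', if_pos hi]
        exact hxi
    rw [withDensity_apply _ hCm, ← lintegral_indicator hCm]
    calc ∫⁻ x, C.indicator (ρ v n) x ∂γ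
        = ∫⁻ x, ∏ i ∈ t, h i (x i) ∂γ := by simp_rw [hpt]
      _ = ∏ i ∈ t, ∫⁻ x, h i (x i) ∂γ := lintegral_prod_eval hind t h hhm
      _ = ∏ i ∈ t, gaussianReal (v i) 1 (A' i) := by
          refine Finset.prod_congr rfl fun i _ => ?_
          have h1 : ∫⁻ x : ℕ → ℝ, h i (x i) ∂γ = ∫⁻ r, h i r ∂(γ.map (fun x : ℕ → ℝ => x i)) :=
            (lintegral_map (hhm i) (measurable_pi_apply i)).symm
          rw [h1, gs_marginal hGS i, hdef]
          show ∫⁻ r, (A' i).indicator (d (v i)) r ∂N = _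
          rw [lintegral_indicator (hA'm i), ← withDensity_apply _ (hA'm i), withDensity_d]
      _ = ∏ i ∈ s, gaussianReal (v i) 1 (A i) := by
          refine (Finset.prod_subset Finset.subset_union_left fun i _ hni => ?_).symm.trans ?_
          · simp [hA', if_neg hni]
          · exact Finset.prod_congr rfl fun i hi => by simp [hA', if_pos hi]
  constructor
  · constructor
    have := key ∅ (fun _ => univ) (by simp)
    simpa using this
  · exact key

lemma measurable_add_right (v : ℕ → ℝ) : Measurable (fun x : ℕ → ℝ => x + v) :=
  measurable_pi_lambda _ fun i => by fun_prop

lemma gs_shift {γ : Measure (ℕ → ℝ)} (hGS : GS 0 γ) (v : ℕ → ℝ) :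
    GS v (γ.map (· + v)) := by
  haveI := hGS.1
  constructor
  · exact Measure.isProbabilityMeasure_map (measurable_add_right v).aemeasurable
  · intro s A hA
    have hpre : (· + v) ⁻¹' (⋂ i ∈ s, (fun x : ℕ → ℝ => x i) ⁻¹' A i)
        = ⋂ i ∈ s, (fun x : ℕ → ℝ => x i) ⁻¹' ((· + v i) ⁻¹' A i) := by
      ext x
      simp [Pi.add_apply]
    have hCm : MeasurableSet (⋂ i ∈ s, (fun x : ℕ → ℝ => x i) ⁻¹' A i) :=
      MeasurableSet.biInter (Finset.countable_toSet s)
        fun i hi => measurable_pi_apply i (hA i hi)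
    rw [Measure.map_apply (measurable_add_right v) hCm, hpre,
      hGS.2 s (fun i => (· + v i) ⁻¹' A i) (fun i hi => (measurable_add_const (v i)) (hA i hi))]
    refine Finset.prod_congr rfl fun i hi => ?_
    have : gaussianReal (0 : ℝ) 1 ((· + v i) ⁻¹' A i)
        = (gaussianReal (0:ℝ) 1).map (· + v i) (A i) := by
      rw [Measure.map_apply (measurable_add_const (v i)) (hA i hi)]
    rw [Pi.zero_apply, this, gaussianReal_map_add_const, zero_add]

lemma qi {γ : Measure (ℕ → ℝ)} (hGS : GS 0 γ) (hind : iIndep evalσ γ)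
    (v : ℕ → ℝ) (n : ℕ) (hv : ∀ i, n ≤ i → v i = 0) {B : Set (ℕ → ℝ)}
    (hB : MeasurableSet B) :
    γ ((· + v) ⁻¹' B) = 0 ↔ γ B = 0 := by
  have hmap : γ.map (· + v) = γ.withDensity (ρ v n) :=
    gs_unique (gs_shift hGS v) (gs_withDensity hGS hind v n hv)
  rw [← Measure.map_apply (measurable_add_right v) hB, hmap,
    withDensity_apply_eq_zero (ρ_meas v n)]
  have : {x | ρ v n x ≠ 0} = univ := eq_univ_of_forall fun x => ρ_ne_zero v n x
  rw [this, univ_inter]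

end StdGaussianAux

open StdGaussianAux Filter

theorem stmt_1 (γinf : Measure (ℕ → ℝ)) (hγ : IsStdGaussianSeq γinf) (a : ℝ)
    (K : Set (ℕ → ℝ)) (hK : MeasurableSet K) (hKpos : 0 < γinf K) :
    ∀ᵐ y ∂γinf, 0 < γinf ((fun x => Real.sqrt (1 + a ^ 2) • x + a • y) '' K) := by
  classical
  obtain ⟨hprob, hindf, hmar⟩ := hγ
  haveI := hprob
  set c := Real.sqrt (1 + a ^ 2) with hcdef
  have hc : 0 < c := Real.sqrt_pos.mpr (by positivity)
  have hc2 : c ^ 2 = 1 + a ^ 2 := Real.sq_sqrt (by positivity)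
  have hind : iIndep evalσ γinf := hindf.iIndep
  have hGS : GS 0 γinf := by
    refine ⟨hprob, fun s A hA => ?_⟩
    rw [hindf.measure_inter_preimage_eq_mul s hA]
    refine Finset.prod_congr rfl fun i hi => ?_
    rw [← Measure.map_apply (measurable_pi_apply i) (hA i hi), hmar i, Pi.zero_apply]
  -- the rotation map
  set W : (ℕ → ℝ) × (ℕ → ℝ) → (ℕ → ℝ) := fun p i => (p.2 i - a * p.1 i) / c with hWdef
  have hWmeas : Measurable W := by
    rw [hWdef]; fun_prop
  -- each coordinate rotation
  have hrotcoef : (-(a/c))^2 + (1/c)^2 = 1 := by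
    field_simp
    linarith [hc2]
  -- law of W is γinf
  have hlaw : (γinf.prod γinf).map W = γinf := by
    refine StdGaussianAux.gs_unique (m := 0) ⟨Measure.isProbabilityMeasure_map hWmeas.aemeasurable,
      fun s A hA => ?_⟩ hGS
    have hCm : MeasurableSet (⋂ i ∈ s, (fun x : ℕ → ℝ => x i) ⁻¹' A i) :=
      MeasurableSet.biInter (Finset.countable_toSet s)
        fun i hi => measurable_pi_apply i (hA i hi)
    set Q : ℕ → Set (ℝ × ℝ) := fun i => (fun q : ℝ × ℝ => (q.2 - a * q.1)/c) ⁻¹' A i with hQdef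
    have hQm : ∀ i ∈ s, MeasurableSet (Q i) := fun i hi => by
      exact ((measurable_snd.sub (measurable_fst.const_mul a)).div_const c) (hA i hi)
    set F : ℕ → ℝ → ℝ≥0∞ := fun i t => N (Prod.mk t ⁻¹' Q i) with hFdef
    have hFm : ∀ i ∈ s, Measurable (F i) := fun i hi =>
      measurable_measure_prodMk_left (hQm i hi)
    set F' : ℕ → ℝ → ℝ≥0∞ := fun i => if i ∈ s then F i else fun _ => 1 with hF'def
    have hF'm : ∀ i, Measurable (F' i) := by
      intro i
      by_cases hi : i ∈ s <;> simp only [hF'def, if_pos, if_neg, hi, if_true, if_false]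
      exacts [hFm i hi, measurable_const]
    rw [Measure.map_apply hWmeas hCm, Measure.prod_apply (hWmeas hCm)]
    have hsec : ∀ y : ℕ → ℝ, γinf (Prod.mk y ⁻¹' (W ⁻¹' (⋂ i ∈ s, (fun x : ℕ → ℝ => x i) ⁻¹' A i)))
        = ∏ i ∈ s, F' i (y i) := by
      intro y
      have heq : Prod.mk y ⁻¹' (W ⁻¹' (⋂ i ∈ s, (fun x : ℕ → ℝ => x i) ⁻¹' A i))
          = ⋂ i ∈ s, (fun x : ℕ → ℝ => x i) ⁻¹' ((fun r => (r - a * y i)/c) ⁻¹' A i) := by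
        ext z
        simp [hWdef, mem_iInter]
      rw [heq, hGS.2 s (fun i => (fun r => (r - a * y i)/c) ⁻¹' A i)
        (fun i hi => by exact ((measurable_id.sub_const _).div_const c) (hA i hi))]
      refine Finset.prod_congr rfl fun i hi => ?_
      rw [hF'def]
      simp only [if_pos hi]
      rfl
    simp_rw [hsec]
    rw [StdGaussianAux.lintegral_prod_eval hind s F' hF'm]
    refine Finset.prod_congr rfl fun i hi => ?_
    have h1 : ∫⁻ y : ℕ → ℝ, F' i (y i) ∂γinf = ∫⁻ t, F' i t ∂N :=
      (lintegral_map (hF'm i) (measurable_pi_apply i)).symm.trans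
        (by rw [StdGaussianAux.gs_marginal hGS i]; rfl)
    rw [h1, hF'def]
    simp only [if_pos hi]
    have h2 : ∫⁻ t, F i t ∂N = (N.prod N) (Q i) := (Measure.prod_apply (hQm i hi)).symm
    have h3 : Q i = (fun q : ℝ × ℝ => (-(a/c)) * q.1 + (1/c) * q.2) ⁻¹' A i := by
      rw [hQdef]
      ext q
      have : (q.2 - a * q.1)/c = (-(a/c)) * q.1 + (1/c) * q.2 := by field_simp; ring
      simp [this]
    rw [h2, h3, ← Measure.map_apply (by fun_prop) (hA i hi), rot_map hrotcoef, Pi.zero_apply]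
    rfl
  -- the section function
  set S : Set ((ℕ → ℝ) × (ℕ → ℝ)) := W ⁻¹' K with hSdef
  have hS : MeasurableSet S := hWmeas hK
  set f : (ℕ → ℝ) → ℝ≥0∞ := fun y => γinf (Prod.mk y ⁻¹' S) with hfdef
  have hfmeas : Measurable f := measurable_measure_prodMk_left hS
  have hint : ∫⁻ y, f y ∂γinf = γinf K := by
    rw [hfdef]
    rw [← Measure.prod_apply hS, hSdef, ← Measure.map_apply hWmeas hK, hlaw]
  -- invariance of vanishing under finite modifications
  have hinv : ∀ (n : ℕ) (y x : ℕ → ℝ), (∀ i, n ≤ i → y i = x i) → (f y = 0 ↔ f x = 0) := by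
    intro n y x hyx
    set v : ℕ → ℝ := fun i => a * (x i - y i) with hvdef
    have hv : ∀ i, n ≤ i → v i = 0 := fun i hi => by simp [hvdef, hyx i hi]
    have hsec : Prod.mk y ⁻¹' S = (· + v) ⁻¹' (Prod.mk x ⁻¹' S) := by
      ext z
      have hW : W (x, z + v) = W (y, z) := by
        funext i
        simp only [hWdef, Pi.add_apply, hvdef]
        ring_nf
      simp only [mem_preimage, hSdef]
      rw [show Prod.mk x (z + v) = (x, z + v) from rfl, hW]
    rw [hfdef]
    simp only []
    rw [hsec, StdGaussianAux.qi hGS hind v n hv (measurable_prodMk_left hS)]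
  -- the event
  set E : Set (ℕ → ℝ) := {y | f y ≠ 0} with hEdef
  have hEm : MeasurableSet E := (hfmeas (measurableSet_singleton 0)).compl
  -- E is a tail event
  have ht_tail : MeasurableSet[limsup evalσ atTop] E := by
    rw [limsup_eq_iInf_iSup_of_nat]
    rw [MeasurableSpace.measurableSet_iInf]
    intro n
    set ins : (ℕ → ℝ) → (ℕ → ℝ) := fun w i => if i < n then 0 else w (i - n) with hinsdef
    have hinsm : Measurable ins := by
      refine measurable_pi_lambda _ fun i => ?_
      by_cases hi : i < n <;> simp only [hinsdef, hi, if_true, if_false]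
      exacts [measurable_const, measurable_pi_apply _]
    set r : (ℕ → ℝ) → (ℕ → ℝ) := fun y j => y (n + j) with hrdef
    have hrm : Measurable[⨆ i ≥ n, evalσ i] r :=
      @measurable_pi_lambda (ℕ → ℝ) ℕ (fun _ => ℝ) (⨆ i ≥ n, evalσ i) (fun _ => inferInstance) r
        (fun j => (Measurable.of_comap_le le_rfl).mono
          (le_iSup₂ (f := fun i (_ : i ≥ n) => evalσ i) (n + j) (Nat.le_add_right n j)) le_rfl)
    have hEeq : E = r ⁻¹' (ins ⁻¹' E) := by
      ext y
      have hagree : ∀ i, n ≤ i → y i = ins (r y) i := by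
        intro i hi
        simp only [hinsdef, hrdef, Nat.add_sub_cancel' hi, if_neg (Nat.not_lt.mpr hi)]
      simp only [mem_preimage, hEdef, mem_setOf_eq]
      rw [not_iff_not]
      exact hinv n y (ins (r y)) hagree
    rw [hEeq]
    exact hrm (hinsm hEm)
  -- Kolmogorov 0-1
  have h01 : γinf E = 0 ∨ γinf E = 1 :=
    measure_zero_or_one_of_measurableSet_limsup_atTop evalσ_le hind ht_tail
  have hE1 : γinf E = 1 := by
    rcases h01 with h0 | h1
    · exfalso
      have hae : ∀ᵐ y ∂γinf, f y = 0 := by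
        rw [ae_iff]
        simpa [hEdef] using h0
      have : ∫⁻ y, f y ∂γinf = 0 := (lintegral_eq_zero_iff hfmeas).mpr hae
      rw [hint] at this
      exact hKpos.ne' this
    · exact h1
  -- conclusion
  have himg : ∀ y : ℕ → ℝ, ((fun x => c • x + a • y) '' K) = Prod.mk y ⁻¹' S := by
    intro y
    ext z
    constructor
    · rintro ⟨x, hx, rfl⟩
      have : W (y, c • x + a • y) = x := by
        funext i
        simp only [hWdef, Pi.add_apply, Pi.smul_apply, smul_eq_mul]
        field_simp
        ring
      simp only [mem_preimage, hSdef]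
      rw [show Prod.mk y (c • x + a • y) = (y, c • x + a • y) from rfl, this]
      exact hx
    · intro hz
      refine ⟨W (y, z), hz, ?_⟩
      funext i
      simp only [hWdef, Pi.add_apply, Pi.smul_apply, smul_eq_mul]
      field_simp
      ring
  rw [ae_iff]
  have hset : {y | ¬ 0 < γinf ((fun x => c • x + a • y) '' K)} = Eᶜ := by
    ext y
    simp only [mem_setOf_eq, himg y, hEdef, mem_compl_iff, not_not, pos_iff_ne_zero, hfdef]
  rw [hset]
  rwa [prob_compl_eq_zero_iff hEm]
end

section
/- Let γ_∞ be the product of standard Gaussian measures on ℝ^ℕ and let a, b ∈ ℝ with a² ≠ b² + 1. Then for γ_∞-almost every y ∈ ℝ^ℕ, the set a·K + b·y has γ_∞-measure 0, where K = {x ∈ ℝ^ℕ : lim_{n→∞}((1/n)Σ_{k<n} x(k)²)^{1/2} = 1}. -/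
open MeasureTheory ProbabilityTheory Real Filter Finset
open scoped ENNReal NNReal

section GaussianMoments


lemma integrable_exp_half : Integrable (fun x : ℝ => Real.exp (-(1/2) * x^2)) := by
  exact integrable_exp_neg_mul_sq (by norm_num)

lemma integrable_mul_exp_half : Integrable (fun x : ℝ => x * Real.exp (-(1/2) * x^2)) := by
  have := integrable_rpow_mul_exp_neg_mul_sq (b := 1/2) (by norm_num) (s := 1) (by norm_num)
  simpa [Real.rpow_one] using this

lemma integrable_sq_exp_half : Integrable (fun x : ℝ => x ^ 2 * Real.exp (-(1/2) * x^2)) := by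
  have := integrable_rpow_mul_exp_neg_mul_sq (b := 1/2) (by norm_num) (s := 2) (by norm_num)
  have h : ∀ x : ℝ, x ^ (2:ℝ) = x ^ 2 := fun x => by
    rw [show (2:ℝ) = ((2:ℕ):ℝ) by norm_num, Real.rpow_natCast]
  simpa [h] using this

lemma integral_sq_exp_half : ∫ x : ℝ, x ^ 2 * Real.exp (-(1/2) * x^2) = Real.sqrt (2 * π) := by
  have hderiv : ∀ x : ℝ, HasDerivAt (fun x : ℝ => x * Real.exp (-(1/2) * x^2))
      (Real.exp (-(1/2) * x^2) - x ^ 2 * Real.exp (-(1/2) * x^2)) x := by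
    intro x
    have h1 : HasDerivAt (fun x : ℝ => -(1/2) * x^2) (-(1/2) * (2 * x)) x :=
      by simpa using (hasDerivAt_pow 2 x).const_mul (-(1/2) : ℝ)
    have h2 : HasDerivAt (fun x : ℝ => Real.exp (-(1/2) * x^2))
        (Real.exp (-(1/2) * x^2) * (-(1/2) * (2 * x))) x := h1.exp
    have := (hasDerivAt_id x).mul h2
    refine this.congr_deriv ?_
    simp only [id]
    ring
  have hint : Integrable (fun x : ℝ => Real.exp (-(1/2) * x^2) - x ^ 2 * Real.exp (-(1/2) * x^2)) :=
    integrable_exp_half.sub integrable_sq_exp_half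
  have h0 := integral_eq_zero_of_hasDerivAt_of_integrable hderiv hint integrable_mul_exp_half
  rw [integral_sub integrable_exp_half integrable_sq_exp_half, sub_eq_zero] at h0
  rw [← h0, integral_gaussian]
  rw [show ((2:ℝ)*π)=π/(1/2) by ring]

lemma gaussianPDFReal_zero_one (x : ℝ) :
    gaussianPDFReal 0 1 x = Real.exp (-(1/2) * x^2) * (Real.sqrt (2 * π))⁻¹ := by
  simp [gaussianPDFReal]
  ring_nf

example : (gaussianReal 0 1 : Measure ℝ) =
    volume.withDensity (fun x => ((gaussianPDFReal 0 1 x).toNNReal : ℝ≥0∞)) := by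
  rw [gaussianReal_of_var_ne_zero 0 one_ne_zero]
  rfl

lemma integrable_gaussianReal_of {g : ℝ → ℝ} (hg : Integrable (fun x => g x * Real.exp (-(1/2) * x^2)))
    (_hgm : Measurable g) : Integrable g (gaussianReal 0 1) := by
  rw [gaussianReal_of_var_ne_zero 0 one_ne_zero]
  have : (gaussianPDF 0 1) = fun x => ((gaussianPDFReal 0 1 x).toNNReal : ℝ≥0∞) := rfl
  rw [this, integrable_withDensity_iff_integrable_smul
    ((measurable_gaussianPDFReal 0 1).real_toNNReal)]
  have : (fun x => ((gaussianPDFReal 0 1 x).toNNReal : ℝ≥0) • g x)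
      = fun x => (g x * Real.exp (-(1/2) * x^2)) * (Real.sqrt (2 * π))⁻¹ := by
    funext x
    rw [NNReal.smul_def, Real.coe_toNNReal _ (gaussianPDFReal_nonneg 0 1 x),
      gaussianPDFReal_zero_one, smul_eq_mul]
    ring
  rw [this]
  exact hg.mul_const _

lemma integral_gaussianReal_of {g : ℝ → ℝ} :
    ∫ x, g x ∂(gaussianReal 0 1)
      = (∫ x, g x * Real.exp (-(1/2) * x^2)) * (Real.sqrt (2 * π))⁻¹ := by
  rw [gaussianReal_of_var_ne_zero 0 one_ne_zero]
  have : (gaussianPDF 0 1) = fun x => ((gaussianPDFReal 0 1 x).toNNReal : ℝ≥0∞) := rfl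
  rw [this, integral_withDensity_eq_integral_smul
    ((measurable_gaussianPDFReal 0 1).real_toNNReal), ← integral_mul_const]
  congr 1
  funext x
  rw [NNReal.smul_def, Real.coe_toNNReal _ (gaussianPDFReal_nonneg 0 1 x),
    gaussianPDFReal_zero_one, smul_eq_mul]
  ring

lemma sqrt_two_pi_ne_zero : Real.sqrt (2 * π) ≠ 0 := by
  positivity

lemma integrable_sq_gaussian : Integrable (fun x : ℝ => x ^ 2) (gaussianReal 0 1) :=
  integrable_gaussianReal_of integrable_sq_exp_half (measurable_id.pow_const 2)

lemma integral_sq_gaussian : ∫ x, x ^ 2 ∂(gaussianReal 0 1) = 1 := by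
  rw [integral_gaussianReal_of, integral_sq_exp_half, mul_inv_cancel₀ sqrt_two_pi_ne_zero]

lemma integrable_id_gaussian : Integrable (fun x : ℝ => x) (gaussianReal 0 1) :=
  integrable_gaussianReal_of integrable_mul_exp_half measurable_id

lemma integral_mul_exp_half : ∫ x : ℝ, x * Real.exp (-(1/2) * x^2) = 0 := by
  have hderiv : ∀ x : ℝ, HasDerivAt (fun x : ℝ => -Real.exp (-(1/2) * x^2))
      (x * Real.exp (-(1/2) * x^2)) x := by
    intro x
    have h1 : HasDerivAt (fun x : ℝ => -(1/2) * x^2) (-(1/2) * (2 * x)) x := by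
      simpa using (hasDerivAt_pow 2 x).const_mul (-(1/2) : ℝ)
    have h2 := h1.exp.neg
    refine h2.congr_deriv ?_
    ring
  exact integral_eq_zero_of_hasDerivAt_of_integrable hderiv integrable_mul_exp_half
    integrable_exp_half.neg

lemma integral_id_gaussian : ∫ x, x ∂(gaussianReal 0 1) = 0 := by
  rw [integral_gaussianReal_of, integral_mul_exp_half, zero_mul]


lemma indepFun_pair_prod {Ω Ω' : Type*} [MeasurableSpace Ω] [MeasurableSpace Ω']
    {μ : Measure Ω} {ν : Measure Ω'} [SFinite ν]
    {X₁ X₂ : Ω → ℝ} {Y₁ Y₂ : Ω' → ℝ}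
    (hX₁ : Measurable X₁) (hX₂ : Measurable X₂) (hY₁ : Measurable Y₁) (hY₂ : Measurable Y₂)
    (hX : IndepFun X₁ X₂ μ) (hY : IndepFun Y₁ Y₂ ν) :
    IndepFun (fun p : Ω × Ω' => (X₁ p.1, Y₁ p.2)) (fun p : Ω × Ω' => (X₂ p.1, Y₂ p.2))
      (μ.prod ν) := by
  rw [indepFun_iff_measure_inter_preimage_eq_mul]
  intro s t hs ht
  set A : Set (Ω × Ω') := (fun p : Ω × Ω' => (X₁ p.1, Y₁ p.2)) ⁻¹' s with hA
  set B : Set (Ω × Ω') := (fun p : Ω × Ω' => (X₂ p.1, Y₂ p.2)) ⁻¹' t with hB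
  have hAm : MeasurableSet A :=
    ((hX₁.comp measurable_fst).prodMk (hY₁.comp measurable_snd)) hs
  have hBm : MeasurableSet B :=
    ((hX₂.comp measurable_fst).prodMk (hY₂.comp measurable_snd)) ht
  set S : Set (ℝ × Ω') := (fun q : ℝ × Ω' => (q.1, Y₁ q.2)) ⁻¹' s with hS
  set T : Set (ℝ × Ω') := (fun q : ℝ × Ω' => (q.1, Y₂ q.2)) ⁻¹' t with hT
  have hSm : MeasurableSet S := (measurable_fst.prodMk (hY₁.comp measurable_snd)) hs
  have hTm : MeasurableSet T := (measurable_fst.prodMk (hY₂.comp measurable_snd)) ht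
  set F : ℝ → ℝ≥0∞ := fun x => ν (Prod.mk x ⁻¹' S) with hF
  set G : ℝ → ℝ≥0∞ := fun x => ν (Prod.mk x ⁻¹' T) with hG
  have hFm : Measurable F := measurable_measure_prodMk_left hSm
  have hGm : Measurable G := measurable_measure_prodMk_left hTm
  have key : ∀ ω : Ω, ν (Prod.mk ω ⁻¹' (A ∩ B)) = F (X₁ ω) * G (X₂ ω) := by
    intro ω
    have h1 : Prod.mk ω ⁻¹' (A ∩ B) =
        (Y₁ ⁻¹' (Prod.mk (X₁ ω) ⁻¹' s)) ∩ (Y₂ ⁻¹' (Prod.mk (X₂ ω) ⁻¹' t)) := rfl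
    have h2 : Prod.mk (X₁ ω) ⁻¹' S = Y₁ ⁻¹' (Prod.mk (X₁ ω) ⁻¹' s) := rfl
    have h3 : Prod.mk (X₂ ω) ⁻¹' T = Y₂ ⁻¹' (Prod.mk (X₂ ω) ⁻¹' t) := rfl
    rw [h1, hY.measure_inter_preimage_eq_mul _ _ (measurable_prodMk_left hs)
      (measurable_prodMk_left ht), hF, hG]
    simp only [h2, h3]
  have keyA : ∀ ω : Ω, ν (Prod.mk ω ⁻¹' A) = F (X₁ ω) := fun ω => rfl
  have keyB : ∀ ω : Ω, ν (Prod.mk ω ⁻¹' B) = G (X₂ ω) := fun ω => rfl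
  rw [Measure.prod_apply (hAm.inter hBm), Measure.prod_apply hAm, Measure.prod_apply hBm]
  simp_rw [key, keyA, keyB]
  exact lintegral_mul_eq_lintegral_mul_lintegral_of_indepFun
    (hFm.comp hX₁) (hGm.comp hX₂) (hX.comp hFm hGm)

lemma slln_sq {μ : Measure (ℕ → ℝ)} (hμ : IsStdGaussianSeq μ) :
    ∀ᵐ x ∂μ, Filter.Tendsto (fun n : ℕ => (∑ k ∈ range n, (x k) ^ 2) / (n : ℝ))
      Filter.atTop (nhds 1) := by
  obtain ⟨hprob, hindep, hmap⟩ := hμ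
  have hmeas : ∀ k, Measurable (fun x : ℕ → ℝ => x k) := fun k => measurable_pi_apply k
  set X : ℕ → (ℕ → ℝ) → ℝ := fun k x => (x k) ^ 2 with hX
  have hsq : Measurable (fun t : ℝ => t ^ 2) := measurable_id.pow_const 2
  have hXeq : ∀ k, X k = (fun t : ℝ => t ^ 2) ∘ (fun x => x k) := fun k => rfl
  have hmapX : ∀ k, μ.map (X k) = (gaussianReal 0 1).map (fun t : ℝ => t ^ 2) := by
    intro k
    rw [hXeq k, ← Measure.map_map hsq (hmeas k), hmap k]
  have hint : Integrable (X 0) μ := by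
    have hg : AEStronglyMeasurable (fun t : ℝ => t ^ 2) (μ.map (fun x => x 0)) :=
      hsq.aestronglyMeasurable
    have := (integrable_map_measure hg (hmeas 0).aemeasurable).mp
      (by rw [hmap 0]; exact integrable_sq_gaussian)
    exact this
  have hpair : Pairwise (Function.onFun (IndepFun · · μ) X) := by
    intro i j hij
    exact (hindep.indepFun hij).comp hsq hsq
  have hident : ∀ i, IdentDistrib (X i) (X 0) μ μ := by
    intro i
    exact ⟨((hmeas i).pow_const 2).aemeasurable, ((hmeas 0).pow_const 2).aemeasurable,
      by rw [hmapX i, hmapX 0]⟩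
  have hE : μ[X 0] = 1 := by
    have : μ[X 0] = ∫ t, t ^ 2 ∂(μ.map (fun x => x 0)) := by
      rw [integral_map (hmeas 0).aemeasurable hsq.aestronglyMeasurable]
    rw [this, hmap 0, integral_sq_gaussian]
  have := strong_law_ae_real X hint hpair hident
  rw [hE] at this
  exact this

lemma slln_cross {μ : Measure (ℕ → ℝ)} (hμ : IsStdGaussianSeq μ) :
    ∀ᵐ p ∂(μ.prod μ), Filter.Tendsto
      (fun n : ℕ => (∑ k ∈ range n, p.1 k * p.2 k) / (n : ℝ))
      Filter.atTop (nhds 0) := by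
  obtain ⟨hprob, hindep, hmap⟩ := hμ
  haveI : IsProbabilityMeasure μ := hprob
  have hmeas : ∀ k, Measurable (fun x : ℕ → ℝ => x k) := fun k => measurable_pi_apply k
  set W : ℕ → (ℕ → ℝ) × (ℕ → ℝ) → ℝ := fun k p => p.1 k * p.2 k with hW
  have hmul : Measurable (fun q : ℝ × ℝ => q.1 * q.2) := measurable_fst.mul measurable_snd
  have hWmeas : ∀ k, Measurable (W k) := fun k =>
    ((hmeas k).comp measurable_fst).mul ((hmeas k).comp measurable_snd)
  -- fst/snd coordinate maps
  have hfstmap : (μ.prod μ).map Prod.fst = μ := by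
    rw [Measure.map_fst_prod]; simp
  have hsndmap : (μ.prod μ).map Prod.snd = μ := by
    rw [Measure.map_snd_prod]; simp
  -- marginal of W k
  have hmapW : ∀ k, (μ.prod μ).map (W k) =
      ((gaussianReal 0 1).prod (gaussianReal 0 1)).map (fun q : ℝ × ℝ => q.1 * q.2) := by
    intro k
    have hTk : Measurable (fun p : (ℕ → ℝ) × (ℕ → ℝ) => (p.1 k, p.2 k)) :=
      ((hmeas k).comp measurable_fst).prodMk ((hmeas k).comp measurable_snd)
    have h1 : (μ.prod μ).map (fun p : (ℕ → ℝ) × (ℕ → ℝ) => (p.1 k, p.2 k)) =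
        (gaussianReal 0 1).prod (gaussianReal 0 1) := by
      have := Measure.map_prod_map (f := fun x : ℕ → ℝ => x k) (g := fun x : ℕ → ℝ => x k)
        μ μ (hmeas k) (hmeas k)
      rw [hmap k] at this
      exact this.symm
    calc (μ.prod μ).map (W k)
        = ((μ.prod μ).map (fun p : (ℕ → ℝ) × (ℕ → ℝ) => (p.1 k, p.2 k))).map
            (fun q : ℝ × ℝ => q.1 * q.2) := by
          rw [Measure.map_map hmul hTk]; rfl
      _ = _ := by rw [h1]
  -- pairwise independence
  have hpair : Pairwise (Function.onFun (IndepFun · · (μ.prod μ)) W) := by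
    intro i j hij
    have := indepFun_pair_prod (hmeas i) (hmeas j) (hmeas i) (hmeas j)
      (hindep.indepFun hij) (hindep.indepFun hij)
    exact this.comp hmul hmul
  -- identically distributed
  have hident : ∀ i, IdentDistrib (W i) (W 0) (μ.prod μ) (μ.prod μ) := fun i =>
    ⟨(hWmeas i).aemeasurable, (hWmeas 0).aemeasurable, by rw [hmapW i, hmapW 0]⟩
  -- independence of the two coordinates of W 0
  have hfs : IndepFun (fun p : (ℕ → ℝ) × (ℕ → ℝ) => p.1 0)
      (fun p : (ℕ → ℝ) × (ℕ → ℝ) => p.2 0) (μ.prod μ) := by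
    rw [indepFun_iff_map_prod_eq_prod_map_map
      (show Measurable fun p : (ℕ → ℝ) × (ℕ → ℝ) => p.1 0 from
        (hmeas 0).comp measurable_fst).aemeasurable
      (show Measurable fun p : (ℕ → ℝ) × (ℕ → ℝ) => p.2 0 from
        (hmeas 0).comp measurable_snd).aemeasurable]
    have hmm := Measure.map_prod_map (f := fun x : ℕ → ℝ => x 0) (g := fun x : ℕ → ℝ => x 0)
      μ μ (hmeas 0) (hmeas 0)
    have hm1 : (μ.prod μ).map (fun p : (ℕ → ℝ) × (ℕ → ℝ) => p.1 0)
        = μ.map (fun x : ℕ → ℝ => x 0) := by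
      rw [show (fun p : (ℕ → ℝ) × (ℕ → ℝ) => p.1 0) = (fun x : ℕ → ℝ => x 0) ∘ Prod.fst
        from rfl, ← Measure.map_map (hmeas 0) measurable_fst, hfstmap]
    have hm2 : (μ.prod μ).map (fun p : (ℕ → ℝ) × (ℕ → ℝ) => p.2 0)
        = μ.map (fun x : ℕ → ℝ => x 0) := by
      rw [show (fun p : (ℕ → ℝ) × (ℕ → ℝ) => p.2 0) = (fun x : ℕ → ℝ => x 0) ∘ Prod.snd
        from rfl, ← Measure.map_map (hmeas 0) measurable_snd, hsndmap]
    rw [hm1, hm2, hmm]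
    rfl
  -- integrability of each factor
  have hintfst : Integrable (fun p : (ℕ → ℝ) × (ℕ → ℝ) => p.1 0) (μ.prod μ) := by
    have h1 : Integrable (fun x : ℕ → ℝ => x 0) μ := by
      have hg : AEStronglyMeasurable (fun t : ℝ => t) (μ.map (fun x => x 0)) :=
        measurable_id.aestronglyMeasurable
      exact (integrable_map_measure hg (hmeas 0).aemeasurable).mp
        (by rw [hmap 0]; exact integrable_id_gaussian)
    have hg : AEStronglyMeasurable (fun x : ℕ → ℝ => x 0) ((μ.prod μ).map Prod.fst) :=
      (hmeas 0).aestronglyMeasurable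
    exact (integrable_map_measure hg measurable_fst.aemeasurable).mp (by rw [hfstmap]; exact h1)
  have hintsnd : Integrable (fun p : (ℕ → ℝ) × (ℕ → ℝ) => p.2 0) (μ.prod μ) := by
    have h1 : Integrable (fun x : ℕ → ℝ => x 0) μ := by
      have hg : AEStronglyMeasurable (fun t : ℝ => t) (μ.map (fun x => x 0)) :=
        measurable_id.aestronglyMeasurable
      exact (integrable_map_measure hg (hmeas 0).aemeasurable).mp
        (by rw [hmap 0]; exact integrable_id_gaussian)
    have hg : AEStronglyMeasurable (fun x : ℕ → ℝ => x 0) ((μ.prod μ).map Prod.snd) :=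
      (hmeas 0).aestronglyMeasurable
    exact (integrable_map_measure hg measurable_snd.aemeasurable).mp (by rw [hsndmap]; exact h1)
  have hint : Integrable (W 0) (μ.prod μ) := hfs.integrable_mul hintfst hintsnd
  -- expectation is zero
  have hifst : ∫ p, p.1 0 ∂(μ.prod μ) = 0 := by
    have : ∫ p, p.1 0 ∂(μ.prod μ) = ∫ x, x 0 ∂((μ.prod μ).map Prod.fst) := by
      rw [integral_map measurable_fst.aemeasurable (hmeas 0).aestronglyMeasurable]
    rw [this, hfstmap]
    have : ∫ x, x 0 ∂μ = ∫ t, t ∂(μ.map (fun x => x 0)) :=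
      (integral_map (hmeas 0).aemeasurable aestronglyMeasurable_id).symm
    rw [this, hmap 0, integral_id_gaussian]
  have hisnd : ∫ p, p.2 0 ∂(μ.prod μ) = 0 := by
    have : ∫ p, p.2 0 ∂(μ.prod μ) = ∫ x, x 0 ∂((μ.prod μ).map Prod.snd) := by
      rw [integral_map measurable_snd.aemeasurable (hmeas 0).aestronglyMeasurable]
    rw [this, hsndmap]
    have : ∫ x, x 0 ∂μ = ∫ t, t ∂(μ.map (fun x => x 0)) :=
      (integral_map (hmeas 0).aemeasurable aestronglyMeasurable_id).symm
    rw [this, hmap 0, integral_id_gaussian]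
  have hE : (μ.prod μ)[W 0] = 0 := by
    have := hfs.integral_mul_eq_mul_integral ((hmeas 0).comp measurable_fst).aestronglyMeasurable
      ((hmeas 0).comp measurable_snd).aestronglyMeasurable
    have h' : W 0 = (fun p : (ℕ → ℝ) × (ℕ → ℝ) => p.1 0) * (fun p => p.2 0) := rfl
    rw [h', this, hifst, zero_mul]
  have := strong_law_ae_real W hint hpair hident
  rw [hE] at this
  exact this

theorem stmt_7 (γinf : Measure (ℕ → ℝ)) (hγ : IsStdGaussianSeq γinf) (a b : ℝ)
    (hab : a ^ 2 ≠ b ^ 2 + 1) :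
    ∀ᵐ y ∂γinf,
      γinf ((fun x => a • x + b • y) ''
        {x : ℕ → ℝ | Filter.Tendsto
          (fun n : ℕ => Real.sqrt ((1 / (n : ℝ)) * ∑ k ∈ Finset.range n, (x k) ^ 2))
          Filter.atTop (nhds 1)}) = 0 := by
  haveI : IsProbabilityMeasure γinf := hγ.1
  have hsq := slln_sq hγ
  have hcross := Measure.ae_ae_of_ae_prod (slln_cross hγ)
  filter_upwards [hsq, hcross] with y hy hyz
  refine measure_mono_null ?_ (ae_iff.mp (hsq.and hyz))
  rintro z ⟨x, hx, rfl⟩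
  simp only [Set.mem_setOf_eq] at hx ⊢
  rintro ⟨h1, h2⟩
  -- from `hx`, get convergence of the averages of squares of `x`
  have hA : Filter.Tendsto (fun n : ℕ => (∑ k ∈ range n, (x k) ^ 2) / (n : ℝ))
      Filter.atTop (nhds 1) := by
    have hnn : ∀ n : ℕ, (0:ℝ) ≤ (1 / (n : ℝ)) * ∑ k ∈ range n, (x k) ^ 2 := by
      intro n
      have : (0:ℝ) ≤ ∑ k ∈ range n, (x k) ^ 2 :=
        Finset.sum_nonneg fun k _ => sq_nonneg _
      positivity
    have h' := hx.mul hx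
    rw [show (1:ℝ) * 1 = 1 by ring] at h'
    refine (h'.congr fun n => ?_)
    rw [Real.mul_self_sqrt (hnn n), one_div, inv_mul_eq_div]
  -- sum identities
  have hsum1 : ∀ n : ℕ, ∑ k ∈ range n, y k * ((a • x + b • y) k)
      = a * ∑ k ∈ range n, (x k * y k) + b * ∑ k ∈ range n, (y k) ^ 2 := by
    intro n
    rw [Finset.mul_sum, Finset.mul_sum, ← Finset.sum_add_distrib]
    refine Finset.sum_congr rfl fun k _ => ?_
    simp only [Pi.add_apply, Pi.smul_apply, smul_eq_mul]
    ring
  have hsum2 : ∀ n : ℕ, ∑ k ∈ range n, ((a • x + b • y) k) ^ 2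
      = a ^ 2 * ∑ k ∈ range n, (x k) ^ 2 + 2 * a * b * ∑ k ∈ range n, (x k * y k)
        + b ^ 2 * ∑ k ∈ range n, (y k) ^ 2 := by
    intro n
    rw [Finset.mul_sum, Finset.mul_sum, Finset.mul_sum, ← Finset.sum_add_distrib,
      ← Finset.sum_add_distrib]
    refine Finset.sum_congr rfl fun k _ => ?_
    simp only [Pi.add_apply, Pi.smul_apply, smul_eq_mul]
    ring
  -- the cross term
  have hxy : Filter.Tendsto (fun n : ℕ => a * ((∑ k ∈ range n, (x k * y k)) / (n : ℝ)))
      Filter.atTop (nhds (-b)) := by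
    have h3 := h2.sub (hy.const_mul b)
    rw [show (0:ℝ) - b * 1 = -b by ring] at h3
    refine h3.congr fun n => ?_
    rw [hsum1 n]
    ring
  -- convergence of averages of squares of `z`
  have hz2 : Filter.Tendsto (fun n : ℕ => (∑ k ∈ range n, ((a • x + b • y) k) ^ 2) / (n : ℝ))
      Filter.atTop (nhds (a ^ 2 - b ^ 2)) := by
    have h4 := (hA.const_mul (a ^ 2)).add ((hxy.const_mul (2 * b)).add (hy.const_mul (b ^ 2)))
    rw [show a ^ 2 * 1 + (2 * b * (-b) + b ^ 2 * 1) = a ^ 2 - b ^ 2 by ring] at h4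
    refine h4.congr fun n => ?_
    rw [hsum2 n]
    ring
  exact hab (by have := tendsto_nhds_unique h1 hz2; linarith)
end GaussianMoments
end

section
/- Let M be an uncountable compact metric space. Then M contains a subset P homeomorphic to the Cantor set 2^ℕ, and the restriction map f ↦ f↾P defines a continuous surjective group homomorphism from C(M, 𝕋) onto C(P, 𝕋), where 𝕋 is the circle group and both groups carry pointwise multiplication and the uniform convergence topology. Moreover, every f : P → 𝕋 continuous admits a continuous extension to M with the same uniform distance from the constant function 1. -/
open scoped ContinuousMap
open Complex Real Topology

lemma circle_dist_le_two (z w : Circle) : dist z w ≤ 2 := by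
  have h := dist_le_norm_add_norm (z : ℂ) (w : ℂ)
  have hz : ‖(z:ℂ)‖ = 1 := Circle.norm_coe z
  have hw : ‖(w:ℂ)‖ = 1 := Circle.norm_coe w
  calc dist z w = dist (z:ℂ) (w:ℂ) := rfl
  _ ≤ 2 := by rw [hz, hw] at h; linarith

lemma dist_circle_exp_one (t : ℝ) : dist (Circle.exp t) 1 = 2 * |Real.sin (t/2)| := by
  have hd : dist (Circle.exp t) 1 = ‖Complex.exp (t * Complex.I) - 1‖ := by
    rw [show dist (Circle.exp t) 1 = dist ((Circle.exp t : ℂ)) ((1 : Circle) : ℂ) from rfl,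
      Complex.dist_eq, Circle.coe_exp, Circle.coe_one]
  rw [hd]
  have h1 : Complex.exp (t * Complex.I)
      = ((Real.cos t : ℝ) : ℂ) + (Real.sin t : ℝ) * Complex.I := by
    rw [Complex.exp_mul_I]; push_cast; ring
  have h1' : Complex.exp (t * Complex.I) - 1
      = ((Real.cos t - 1 : ℝ) : ℂ) + (Real.sin t : ℝ) * Complex.I := by
    rw [h1]; push_cast; ring
  rw [h1', Complex.norm_add_mul_I]
  have hsq : |Real.sin (t/2)|^2 = (1 - Real.cos t)/2 := by
    rw [Real.abs_sin_half, Real.sq_sqrt (by nlinarith [Real.cos_le_one t])]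
  have h2 : (Real.cos t - 1)^2 + (Real.sin t)^2 = (2 * |Real.sin (t/2)|)^2 := by
    have h3 := Real.sin_sq_add_cos_sq t
    nlinarith [abs_nonneg (Real.sin (t/2))]
  rw [h2, Real.sqrt_sq (by positivity)]

lemma circle_mem_slitPlane {z : Circle} (hz : dist z (1 : Circle) < 2) :
    (z : ℂ) ∈ Complex.slitPlane := by
  have hzne : (z:ℂ) ≠ -1 := by
    intro he
    have h : dist (z:ℂ) (1:ℂ) < 2 := hz
    rw [he, Complex.dist_eq] at h
    norm_num at h
  rw [Complex.mem_slitPlane_iff]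
  by_cases him : (z:ℂ).im = 0
  · left
    have habs : ‖(z:ℂ)‖ = 1 := Circle.norm_coe z
    have h2 : (z:ℂ).re ^ 2 = 1 := by
      have h := Complex.sq_norm (z:ℂ)
      rw [habs] at h
      simp [Complex.normSq_apply, him] at h
      nlinarith
    have h3 : ((z:ℂ).re - 1) * ((z:ℂ).re + 1) = 0 := by nlinarith
    rcases mul_eq_zero.mp h3 with h | h
    · nlinarith
    · exfalso; apply hzne; apply Complex.ext <;> simp [him]; linarith
  · right; exact him

lemma abs_sin_eq_sin_abs {x : ℝ} (h : |x| ≤ π) : |Real.sin x| = Real.sin |x| := by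
  rcases abs_cases x with ⟨h1, h2⟩ | ⟨h1, h2⟩
  · rw [h1]
    exact abs_of_nonneg (Real.sin_nonneg_of_nonneg_of_le_pi h2 (by rw [← h1]; exact h))
  · rw [h1, Real.sin_neg]
    have : Real.sin x ≤ 0 := by
      apply Real.sin_nonpos_of_nonpos_of_neg_pi_le (le_of_lt h2)
      rw [h1] at h; linarith
    rw [abs_of_nonpos this]

lemma circle_abs_arg_le {z : Circle} {D : ℝ} (hd : dist z (1 : Circle) ≤ D) :
    |Complex.arg (z : ℂ)| ≤ 2 * Real.arcsin (D / 2) := by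
  set a := Complex.arg (z : ℂ) with ha
  have ha1 : -π < a := Complex.neg_pi_lt_arg _
  have ha2 : a ≤ π := Complex.arg_le_pi _
  have hz : Circle.exp a = z := Circle.exp_arg z
  have hdist : dist z (1 : Circle) = 2 * |Real.sin (a/2)| := by
    rw [← hz, dist_circle_exp_one]
  have hs : |Real.sin (a/2)| ≤ D / 2 := by rw [hdist] at hd; linarith
  have habsa : |a| ≤ π := abs_le.mpr ⟨by linarith, ha2⟩
  have habs2 : |a/2| ≤ π/2 := by rw [abs_div, _root_.abs_two]; linarith
  have hle : |a/2| ≤ Real.arcsin (D/2) := by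
    calc |a/2| = Real.arcsin (Real.sin |a/2|) :=
          (Real.arcsin_sin (by linarith [abs_nonneg (a/2)]) habs2).symm
    _ = Real.arcsin |Real.sin (a/2)| := by
          rw [abs_sin_eq_sin_abs (le_trans habs2 (by linarith [Real.pi_pos]))]
    _ ≤ Real.arcsin (D/2) := Real.monotone_arcsin hs
  rw [abs_div, _root_.abs_two] at hle
  linarith

lemma cantor_lift (g : C(ℕ → Bool, Circle)) :
    ∃ h : C(ℕ → Bool, ℝ), ∀ x, Circle.exp (h x) = g x := by
  classical
  set K : Set ((ℕ → Bool) × (ℕ → Bool)) := {xy | 1 ≤ dist (g xy.1) (g xy.2)} with hK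
  have hKc : IsClosed K := isClosed_le continuous_const
    (continuous_dist.comp ((g.continuous.comp continuous_fst).prodMk
      (g.continuous.comp continuous_snd)))
  have hKcomp : IsCompact K := hKc.isCompact
  have htc : ∀ i : ℕ, IsClosed {xy : (ℕ → Bool) × (ℕ → Bool) | xy.1 i = xy.2 i} := fun i =>
    isClosed_eq ((continuous_apply i).comp continuous_fst)
      ((continuous_apply i).comp continuous_snd)
  have hempty : K ∩ ⋂ i, {xy : (ℕ → Bool) × (ℕ → Bool) | xy.1 i = xy.2 i} = ∅ := by
    ext xy
    simp only [Set.mem_inter_iff, Set.mem_iInter, Set.mem_setOf_eq, Set.mem_empty_iff_false,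
      iff_false, not_and, not_forall]
    intro hxy
    by_contra hc
    push_neg at hc
    have : xy.1 = xy.2 := funext hc
    rw [hK] at hxy
    simp only [Set.mem_setOf_eq, this, dist_self] at hxy
    linarith
  obtain ⟨u, hu⟩ := hKcomp.elim_finite_subfamily_closed _ htc hempty
  set pr : (ℕ → Bool) → (ℕ → Bool) := fun x i => if i ∈ u then x i else false with hpr
  have hpru : ∀ x, ∀ i ∈ u, pr x i = x i := by intro x i hi; simp [hpr, hi]
  have hdist : ∀ x, dist (g x) (g (pr x)) < 1 := by
    intro x
    by_contra hc
    push_neg at hc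
    have : (x, pr x) ∈ K ∩ ⋂ i ∈ u, {xy : (ℕ → Bool) × (ℕ → Bool) | xy.1 i = xy.2 i} := by
      refine ⟨hc, ?_⟩
      simp only [Set.mem_iInter, Set.mem_setOf_eq]
      intro i hi
      exact (hpru x i hi).symm
    rw [hu] at this
    exact this
  have hprcont : Continuous pr := by
    apply continuous_pi
    intro i
    by_cases hi : i ∈ u
    · simpa [hpr, hi] using continuous_apply i
    · simpa [hpr, hi] using continuous_const
  have hprloc : IsLocallyConstant pr := by
    rw [IsLocallyConstant.iff_exists_open]
    intro x
    refine ⟨⋂ i ∈ u, {y : ℕ → Bool | y i = x i}, ?_, ?_, ?_⟩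
    · refine isOpen_biInter_finset fun i _ => ?_
      have he : {y : ℕ → Bool | y i = x i} = (fun y : ℕ → Bool => y i) ⁻¹' {x i} := rfl
      rw [he]
      exact (isOpen_discrete {x i}).preimage (continuous_apply i)
    · simp
    · intro y hy
      simp only [Set.mem_iInter, Set.mem_setOf_eq] at hy
      funext i
      by_cases hi : i ∈ u
      · simp [hpr, hi, hy i hi]
      · simp [hpr, hi]
  set w : (ℕ → Bool) → Circle := fun x => g x * (g (pr x))⁻¹ with hw
  have hwdist : ∀ x, dist ((w x : ℂ)) 1 < 1 := by
    intro x
    have heq : dist ((w x : ℂ)) 1 = dist (g x) (g (pr x)) := by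
      rw [show dist (g x) (g (pr x)) = dist ((g x : ℂ)) ((g (pr x) : ℂ)) from rfl]
      rw [hw]
      push_cast
      rw [Complex.dist_eq, Complex.dist_eq]
      rw [show ((g x : ℂ)) * ((g (pr x) : ℂ))⁻¹ - 1
          = ((g x : ℂ) - (g (pr x) : ℂ)) * ((g (pr x) : ℂ))⁻¹ by field_simp]
      rw [norm_mul, norm_inv, Circle.norm_coe, inv_one, mul_one]
    rw [heq]; exact hdist x
  have hwslit : ∀ x, ((w x : ℂ)) ∈ Complex.slitPlane := by
    intro x
    apply circle_mem_slitPlane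
    calc dist (w x) (1 : Circle) = dist ((w x : ℂ)) 1 := rfl
    _ < 1 := hwdist x
    _ < 2 := by norm_num
  have hcont1 : Continuous fun x => Complex.arg ((g (pr x) : ℂ)) :=
    (hprloc.comp fun y => Complex.arg ((g y : ℂ))).continuous
  have hcontw : Continuous fun x => ((w x : ℂ)) := by
    apply continuous_subtype_val.comp
    exact (g.continuous.mul ((g.continuous.comp hprcont).inv))
  have hcont2 : Continuous fun x => Complex.arg ((w x : ℂ)) := by
    rw [continuous_iff_continuousAt]
    intro x
    exact ContinuousAt.comp (x := x) (g := Complex.arg) (f := fun x => ((w x : ℂ)))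
      (Complex.continuousAt_arg (hwslit x)) hcontw.continuousAt
  refine ⟨⟨fun x => Complex.arg ((g (pr x) : ℂ)) + Complex.arg ((w x : ℂ)), hcont1.add hcont2⟩, ?_⟩
  intro x
  simp only [ContinuousMap.coe_mk]
  rw [Circle.exp_add, Circle.exp_arg, Circle.exp_arg, hw]
  rw [mul_comm (g (pr x)), mul_assoc, inv_mul_cancel, mul_one]

theorem stmt_15 (M : Type*) [MetricSpace M] [CompactSpace M]
    (hM : ¬ (Set.univ : Set M).Countable) :
    ∃ P : Set M, Nonempty (P ≃ₜ (ℕ → Bool)) ∧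
      Continuous (fun f : C(M, Circle) => f.restrict P) ∧
      (∀ f g : C(M, Circle), (f * g).restrict P = f.restrict P * g.restrict P) ∧
      Function.Surjective (fun f : C(M, Circle) => f.restrict P) ∧
      (∀ g : C(↥P, Circle), ∃ f : C(M, Circle), f.restrict P = g ∧
        (⨆ x : M, dist (f x) (1 : Circle)) = ⨆ p : ↥P, dist (g p) (1 : Circle)) := by
  classical
  obtain ⟨j, -, hjc, hji⟩ := IsClosed.exists_nat_bool_injection_of_not_countable
    (isClosed_univ (X := M)) (by simpa using hM)
  have hemb : IsClosedEmbedding j := hjc.isClosedEmbedding hji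
  set P : Set M := Set.range j with hP
  have hPc : IsClosed P := hemb.isClosed_range
  let e : (ℕ → Bool) ≃ₜ ↥P := hemb.isEmbedding.toHomeomorph
  have hPne : Nonempty ↥P := ⟨e (fun _ => false)⟩
  have hMne : Nonempty M := ⟨(e (fun _ => false) : ↥P).1⟩
  -- the key extension property
  have key : ∀ g : C(↥P, Circle), ∃ f : C(M, Circle), f.restrict P = g ∧
      ∀ x : M, dist (f x) (1 : Circle) ≤ ⨆ p : ↥P, dist (g p) (1 : Circle) := by
    intro g
    set D := ⨆ p : ↥P, dist (g p) (1 : Circle) with hD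
    have hbdd : BddAbove (Set.range fun p : ↥P => dist (g p) (1 : Circle)) :=
      ⟨2, by rintro _ ⟨p, rfl⟩; exact circle_dist_le_two _ _⟩
    have hDle : ∀ p : ↥P, dist (g p) (1 : Circle) ≤ D := fun p => le_ciSup hbdd p
    have hD0 : 0 ≤ D := le_trans dist_nonneg (hDle (Classical.arbitrary _))
    have hD2 : D ≤ 2 := ciSup_le fun p => circle_dist_le_two _ _
    by_cases hcase : D < 2
    · -- use the argument function directly
      set θ := 2 * Real.arcsin (D / 2) with hθ
      have harc0 : 0 ≤ Real.arcsin (D / 2) := Real.arcsin_nonneg.mpr (by linarith)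
      have harcπ : Real.arcsin (D / 2) ≤ π / 2 := Real.arcsin_le_pi_div_two _
      have hslit : ∀ p : ↥P, ((g p : ℂ)) ∈ Complex.slitPlane := fun p =>
        circle_mem_slitPlane (lt_of_le_of_lt (hDle p) hcase)
      have hucont : Continuous fun p : ↥P => Complex.arg ((g p : ℂ)) := by
        rw [continuous_iff_continuousAt]
        intro p
        exact ContinuousAt.comp (x := p) (g := Complex.arg) (f := fun p : ↥P => ((g p : ℂ)))
          (Complex.continuousAt_arg (hslit p))
          (continuous_subtype_val.comp g.continuous).continuousAt
      set u : C(↥P, ℝ) := ⟨fun p => Complex.arg ((g p : ℂ)), hucont⟩ with hu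
      have huθ : ∀ p : ↥P, |u p| ≤ θ := fun p => circle_abs_arg_le (hDle p)
      obtain ⟨H, hH⟩ := u.exists_restrict_eq hPc
      set K : C(M, ℝ) := ⟨fun x => max (-θ) (min θ (H x)), by fun_prop⟩ with hKdef
      refine ⟨Circle.exp.comp K, ?_, ?_⟩
      · ext p
        have hHp : H ↑p = u p := by
          have := DFunLike.congr_fun hH p
          simpa using this
        have hb := abs_le.mp (huθ p)
        have hKp : K ↑p = u p := by
          simp only [hKdef, ContinuousMap.coe_mk, hHp]
          rw [min_eq_right hb.2, max_eq_right hb.1]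
        simp only [ContinuousMap.restrict_apply, ContinuousMap.comp_apply, hKp, hu,
          ContinuousMap.coe_mk]
        exact congrArg (fun z : Circle => (z : ℂ)) (Circle.exp_arg (g p))
      · intro x
        have hKb : |K x| ≤ θ := by
          rw [abs_le]
          constructor
          · exact le_max_left _ _
          · simp only [hKdef, ContinuousMap.coe_mk]
            rw [max_le_iff]
            exact ⟨by linarith [harc0], min_le_left _ _⟩
        have hKb2 : |K x / 2| ≤ π / 2 := by
          rw [abs_div]
          have : |K x| ≤ π := le_trans hKb (by linarith)
          rw [abs_of_pos (by norm_num : (0:ℝ) < 2)]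
          apply div_le_div_of_nonneg_right ?_ (by norm_num)
          exact this
        calc dist (Circle.exp.comp K x) (1 : Circle) = 2 * |Real.sin (K x / 2)| := by
              rw [ContinuousMap.comp_apply]; exact dist_circle_exp_one (K x)
        _ = 2 * Real.sin |K x / 2| := by
              rw [abs_sin_eq_sin_abs (le_trans hKb2 (by linarith [Real.pi_pos]))]
        _ ≤ 2 * Real.sin (Real.arcsin (D / 2)) := by
              have hmono : Real.sin |K x / 2| ≤ Real.sin (Real.arcsin (D / 2)) := by
                apply Real.sin_le_sin_of_le_of_le_pi_div_two
                  (by linarith [abs_nonneg (K x / 2), Real.pi_pos]) harcπ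
                rw [abs_div, abs_of_pos (by norm_num : (0:ℝ) < 2)]
                calc |K x| / 2 ≤ θ / 2 := by linarith
                _ = Real.arcsin (D / 2) := by rw [hθ]; ring
              linarith
        _ = D := by rw [Real.sin_arcsin (by linarith) (by linarith)]; ring
    · -- D = 2 : use the lift through the Cantor set
      have hD2' : D = 2 := le_antisymm hD2 (not_lt.mp hcase)
      obtain ⟨h', hh'⟩ := cantor_lift (g.comp ⟨e, e.continuous⟩)
      set hPmap : C(↥P, ℝ) := h'.comp ⟨e.symm, e.symm.continuous⟩ with hPdef
      have hlift : ∀ p : ↥P, Circle.exp (hPmap p) = g p := by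
        intro p
        have := hh' (e.symm p)
        simpa [hPdef] using this
      obtain ⟨H, hH⟩ := hPmap.exists_restrict_eq hPc
      refine ⟨Circle.exp.comp H, ?_, ?_⟩
      · ext p
        have hHp : H ↑p = hPmap p := by
          have := DFunLike.congr_fun hH p
          simpa using this
        simp only [ContinuousMap.restrict_apply, ContinuousMap.comp_apply, hHp]
        exact congrArg (fun z : Circle => (z : ℂ)) (hlift p)
      · intro x
        rw [hD2']
        exact circle_dist_le_two _ _
  refine ⟨P, ⟨e.symm⟩, ?_, ?_, ?_, ?_⟩
  · exact ContinuousMap.continuous_precomp (⟨Subtype.val, continuous_subtype_val⟩ : C(↥P, M))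
  · intro f g
    ext p
    simp
  · intro g
    obtain ⟨f, hf, -⟩ := key g
    exact ⟨f, hf⟩
  · intro g
    obtain ⟨f, hf, hb⟩ := key g
    refine ⟨f, hf, ?_⟩
    have hbddM : BddAbove (Set.range fun x : M => dist (f x) (1 : Circle)) :=
      ⟨2, by rintro _ ⟨x, rfl⟩; exact circle_dist_le_two _ _⟩
    have hge : ∀ p : ↥P, dist (g p) (1 : Circle) = dist (f ↑p) (1 : Circle) := by
      intro p
      rw [← hf]
      rfl
    apply le_antisymm
    · exact ciSup_le hb
    · apply ciSup_le
      intro p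
      rw [hge p]
      exact le_ciSup hbddM (↑p : M)
end

section
/- Let γ_∞ be the product of standard Gaussian measures on ℝ^ℕ and let a ∈ ℝ, K ⊆ ℝ^ℕ Borel. Then the set A = {y ∈ ℝ^ℕ : γ_∞(√(1+a²)·K + a·y) > 0} is invariant under translation by all finitely supported elements of ℝ^ℕ; that is, if y ∈ A and h ∈ ℝ^ℕ has finite support, then y + h ∈ A. -/
open MeasureTheory ProbabilityTheory

lemma measurable_add_const' (c : ℕ → ℝ) : Measurable (fun x : ℕ → ℝ => x + c) := by
  rw [measurable_pi_iff]
  intro j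
  exact ((measurable_pi_apply j : Measurable fun x : ℕ → ℝ => x j)).add_const (c j)

/-- If the pushforwards under a measurable equivalence are absolutely continuous,
so are the original measures. -/
lemma ac_of_map_ac {α β : Type*} [MeasurableSpace α] [MeasurableSpace β]
    (e : α ≃ᵐ β) {μ ν : Measure α} (hac : μ.map e ≪ ν.map e) : μ ≪ ν := by
  refine Measure.AbsolutelyContinuous.mk (fun s hs hνs => ?_)
  have hpre : e ⁻¹' (e.symm ⁻¹' s) = s := by
    ext x; simp
  have h1 : ν.map e (e.symm ⁻¹' s) = 0 := by
    rw [MeasurableEquiv.map_apply, hpre]; exact hνs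
  have h2 : μ.map e (e.symm ⁻¹' s) = 0 := hac h1
  rwa [MeasurableEquiv.map_apply, hpre] at h2

/-- Quasi-invariance of the standard Gaussian sequence measure under a translation
affecting a single coordinate. -/
lemma single_translate_ac (γ : Measure (ℕ → ℝ)) (hγ : IsStdGaussianSeq γ)
    (i : ℕ) (t : ℝ) : γ.map (fun x => x + Pi.single i t) ≪ γ := by
  obtain ⟨hprob, hind, hmarg⟩ := hγ
  haveI : IsProbabilityMeasure γ := hprob
  classical
  -- the measurable equivalence splitting off coordinate `i`
  let e : (ℕ → ℝ) ≃ᵐ ℝ × ({ j // j ≠ i } → ℝ) :=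
    (Homeomorph.funSplitAt (Y := ℝ) i).toMeasurableEquiv
  have he : ⇑e = fun x => (x i, fun j : { j // j ≠ i } => x (j : ℕ)) := by
    funext x; rfl
  set g : (ℕ → ℝ) → ({ j // j ≠ i } → ℝ) := fun x => fun j => x (j : ℕ) with hg
  have hgmeas : Measurable g := measurable_pi_iff.mpr fun j => measurable_pi_apply _
  -- independence of coordinate `i` and the remaining coordinates
  have hIndep : IndepFun (fun x : ℕ → ℝ => x i) g γ := by
    have h_le : ∀ j : ℕ, MeasurableSpace.comap (fun x : ℕ → ℝ => x j) inferInstance ≤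
        MeasurableSpace.pi := fun j => (measurable_pi_apply j).comap_le
    have hbig := indep_iSup_of_disjoint h_le hind.iIndep
      (S := {i}) (T := {i}ᶜ) disjoint_compl_right
    have h1 : (⨆ j ∈ ({i} : Set ℕ), MeasurableSpace.comap (fun x : ℕ → ℝ => x j) inferInstance)
        = MeasurableSpace.comap (fun x : ℕ → ℝ => x i) inferInstance := by
      simp
    have h2 : MeasurableSpace.comap g MeasurableSpace.pi
        = (⨆ j ∈ ({i}ᶜ : Set ℕ), MeasurableSpace.comap (fun x : ℕ → ℝ => x j) inferInstance) := by
      rw [MeasurableSpace.pi, MeasurableSpace.comap_iSup,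
        ← iSup_subtype'' ({i}ᶜ : Set ℕ)
          (fun j => MeasurableSpace.comap (fun x : ℕ → ℝ => x j) inferInstance)]
      exact iSup_congr fun j => MeasurableSpace.comap_comp
    rw [h1, ← h2] at hbig
    exact hbig
  -- the law of `e` is a product measure
  have hmap : γ.map e = (gaussianReal 0 1).prod (γ.map g) := by
    have := (indepFun_iff_map_prod_eq_prod_map_map
      (measurable_pi_apply i).aemeasurable hgmeas.aemeasurable).mp hIndep
    rw [he]
    rw [show (fun x : ℕ → ℝ => (x i, fun j : { j // j ≠ i } => x (j : ℕ)))
        = fun x : ℕ → ℝ => ((fun x : ℕ → ℝ => x i) x, g x) from rfl]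
    rw [this, hmarg i]
  haveI : IsProbabilityMeasure (γ.map g) := Measure.isProbabilityMeasure_map hgmeas.aemeasurable
  -- compute the image of the translated measure
  have hcomp : (⇑e) ∘ (fun x => x + Pi.single i t) = (Prod.map (· + t) id) ∘ ⇑e := by
    funext x
    rw [he]
    simp only [Function.comp_apply, Prod.map_apply, id_eq]
    refine Prod.ext ?_ ?_
    · simp
    · funext j
      simp only
      rw [Pi.add_apply, Pi.single_eq_of_ne j.2, add_zero]
  have hprodmeas : Measurable (Prod.map (· + t) (id : ({ j // j ≠ i } → ℝ) → _)) :=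
    Measurable.prodMap (measurable_add_const t) measurable_id
  have hmap2 : (γ.map (fun x => x + Pi.single i t)).map e
      = (gaussianReal t 1).prod (γ.map g) := by
    rw [Measure.map_map e.measurable (measurable_add_const' _), hcomp,
      ← Measure.map_map hprodmeas e.measurable, hmap,
      ← Measure.map_prod_map _ _ (measurable_add_const t) measurable_id,
      Measure.map_id, gaussianReal_map_add_const t, zero_add]
  -- absolute continuity on the product side
  have hACprod : (gaussianReal t 1).prod (γ.map g) ≪ (gaussianReal 0 1).prod (γ.map g) :=
    Measure.AbsolutelyContinuous.prod
      ((gaussianReal_absolutelyContinuous t one_ne_zero).trans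
        (gaussianReal_absolutelyContinuous' 0 one_ne_zero))
      Measure.AbsolutelyContinuous.rfl
  refine ac_of_map_ac e ?_
  rw [hmap2, hmap]
  exact hACprod

/-- Quasi-invariance of the standard Gaussian sequence measure under finitely
supported translations. -/
lemma finsupp_translate_ac (γ : Measure (ℕ → ℝ)) (hγ : IsStdGaussianSeq γ)
    (c : ℕ → ℝ) (hc : (Function.support c).Finite) : γ.map (fun x => x + c) ≪ γ := by
  classical
  have key : ∀ (s : Finset ℕ) (c : ℕ → ℝ), Function.support c ⊆ ↑s →
      γ.map (fun x => x + c) ≪ γ := by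
    intro s
    induction s using Finset.induction_on with
    | empty =>
      intro c hc
      have : c = 0 := by
        funext j
        by_contra hj
        exact absurd (hc hj) (by simp)
      subst this
      simp only [add_zero]
      rw [show (fun x : ℕ → ℝ => x) = id from rfl, Measure.map_id]
    | @insert a s ha IH =>
      intro c hc
      set c' : ℕ → ℝ := Function.update c a 0 with hc'def
      have hsupp : Function.support c' ⊆ ↑s := by
        intro j hj
        have hj' : c' j ≠ 0 := hj
        by_cases hja : j = a
        · subst hja; simp [hc'def] at hj'
        · have : c j ≠ 0 := by rwa [hc'def, Function.update_of_ne hja] at hj'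
          have := hc this
          simp only [Finset.coe_insert, Set.mem_insert_iff] at this
          rcases this with h' | h'
          · exact absurd h' hja
          · exact h'
      have hdecomp : c = c' + Pi.single a (c a) := by
        funext j
        by_cases hja : j = a
        · subst hja
          rw [Pi.add_apply, hc'def, Function.update_self, Pi.single_eq_same, zero_add]
        · rw [Pi.add_apply, hc'def, Function.update_of_ne hja, Pi.single_eq_of_ne hja,
            add_zero]
      have hcompose : (fun x : ℕ → ℝ => x + c)
          = (fun x => x + Pi.single a (c a)) ∘ (fun x => x + c') := by
        funext x
        show x + c = (x + c') + Pi.single a (c a)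
        conv_lhs => rw [hdecomp]
        exact (add_assoc x c' (Pi.single a (c a))).symm
      rw [hcompose, ← Measure.map_map (measurable_add_const' _) (measurable_add_const' _)]
      exact ((IH c' hsupp).map (measurable_add_const' _)).trans
        (single_translate_ac γ hγ a (c a))
  exact key hc.toFinset c (by simp)

theorem stmt_19 (γinf : Measure (ℕ → ℝ)) (hγ : IsStdGaussianSeq γinf) (a : ℝ)
    (K : Set (ℕ → ℝ)) (hK : MeasurableSet K) (y h : ℕ → ℝ)
    (hh : (Function.support h).Finite)
    (hy : 0 < γinf ((fun x => Real.sqrt (1 + a ^ 2) • x + a • y) '' K)) :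
    0 < γinf ((fun x => Real.sqrt (1 + a ^ 2) • x + a • (y + h)) '' K) := by
  set c : ℕ → ℝ := a • h with hc
  have hcfin : (Function.support c).Finite := by
    refine hh.subset ?_
    intro j hj
    have : a * h j ≠ 0 := hj
    intro h0
    exact this (by rw [h0, mul_zero])
  have hac : γinf.map (fun x => x + c) ≪ γinf := finsupp_translate_ac γinf hγ c hcfin
  set B := (fun x => Real.sqrt (1 + a ^ 2) • x + a • y) '' K with hB
  set T := (fun x => Real.sqrt (1 + a ^ 2) • x + a • (y + h)) '' K with hT
  have hsub : B ⊆ (fun x => x + c) ⁻¹' T := by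
    rintro z ⟨x, hx, rfl⟩
    refine ⟨x, hx, ?_⟩
    rw [smul_add, hc]
    beta_reduce
    abel
  rw [pos_iff_ne_zero]
  intro hT0
  have h1 : γinf.map (fun x => x + c) T = 0 := hac hT0
  have h2 : γinf B ≤ γinf.map (fun x => x + c) T :=
    le_trans (measure_mono hsub) (Measure.le_map_apply (measurable_add_const' c).aemeasurable T)
  rw [h1] at h2
  exact absurd (le_antisymm h2 (by simp)) (ne_of_gt hy)
end
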